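/- arXiv:1506.00233 — 5 statements merged into one kernel-verified Lean document; each statement's English description precedes it below -/
import Mathlib

section
/- Assume Hypothesis (*). If K is the d(I)-subgroup of S for some nonempty index set I, then the centralizer C_S(K) is the product of the factors S_i with i ∉ I, and the normalizer N_S(K) equals K × C_S(K). -/
namespace EngelPaper

variable {G : Type*}

/-- The commutator `[a,b] = a⁻¹b⁻¹ab` (left-normed convention of the paper). -/
def pc [Group G] (a b : G) : G := a⁻¹ * b⁻¹ * a * b

/-- The left-normed Engel commutator `[x, g, g, ..., g]` with `g` repeated `n` times. -/
def engel [Group G] (g x : G) : ℕ → G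
  | 0 => x
  | n + 1 => pc (engel g x n) g

/-- The subgroup `E_n(g)` generated by all `[x, g, ..., g]` (`g` repeated `n` times), `x ∈ G`. -/
def Esub [Group G] (g : G) (n : ℕ) : Subgroup G :=
  Subgroup.closure { y | ∃ x : G, y = engel g x n }

/-- The left-normed Engel commutator `[x, α, ..., α]` (`α` repeated `n` times) for an
automorphism `α`, computed in the semidirect product `G⟨α⟩`; it lies in `G` and equals the
value of this function. -/
def engelAut [Group G] (α : MulAut G) (x : G) : ℕ → G
  | 0 => x
  | n + 1 => (engelAut α x n)⁻¹ * α (engelAut α x n)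

/-- The subgroup `E_{G,n}(α)` generated by all `[x, α, ..., α]`, `x ∈ G`. -/
def EsubAut [Group G] (α : MulAut G) (n : ℕ) : Subgroup G :=
  Subgroup.closure { y | ∃ x : G, y = engelAut α x n }

theorem normal_sSup_of_conj_invariant [Group G] {s : Set (Subgroup G)}
    (h : ∀ N ∈ s, ∀ g : G, Subgroup.map (MulAut.conj g).toMonoidHom N ∈ s) :
    (sSup s).Normal := by
  constructor
  intro x hx g
  have hle : sSup s ≤ (sSup s).comap ((MulAut.conj g).toMonoidHom) := by
    refine sSup_le ?_
    intro N hN y hy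
    simp only [Subgroup.mem_comap]
    exact le_sSup (h N hN g) ⟨y, hy, rfl⟩
  have := hle hx
  simpa [MulAut.conj_apply] using this

theorem normal_sSup [Group G] {s : Set (Subgroup G)}
    (h : ∀ N ∈ s, N.Normal) : (sSup s).Normal := by
  constructor
  intro x hx g
  have hle : sSup s ≤ (sSup s).comap ((MulAut.conj g).toMonoidHom) := by
    refine sSup_le ?_
    intro N hN y hy
    simp only [Subgroup.mem_comap, MulAut.conj_apply, MulEquiv.coe_toMonoidHom]
    exact le_sSup hN ((h N hN).conj_mem y hy g)
  have := hle hx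
  simpa [MulAut.conj_apply] using this

/-- The Fitting subgroup: the subgroup generated by all nilpotent normal subgroups. -/
def fitting (G : Type*) [Group G] : Subgroup G :=
  sSup { N : Subgroup G | N.Normal ∧ Group.IsNilpotent N }

theorem fitting_normal (G : Type*) [Group G] : (fitting G).Normal :=
  normal_sSup fun _ hN => hN.1

/-- One step of the Fitting series: the inverse image of the Fitting subgroup of the quotient. -/
def fitStep (G : Type*) [Group G] (N : { N : Subgroup G // N.Normal }) :
    { N : Subgroup G // N.Normal } :=
  letI := N.2
  ⟨Subgroup.comap (QuotientGroup.mk' N.1) (fitting (G ⧸ N.1)),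
    (fitting_normal (G ⧸ N.1)).comap _⟩

/-- The Fitting series `F_0(G) = 1`, `F_{k+1}(G)/F_k(G) = F(G/F_k(G))`. -/
def fitSeries (G : Type*) [Group G] (n : ℕ) : Subgroup G :=
  ((fitStep G)^[n] ⟨⊥, inferInstance⟩).1

/-- The Fitting height: the least `h` with `F_h(G) = G`. -/
noncomputable def fittingHeight (G : Type*) [Group G] : ℕ :=
  sInf { h | fitSeries G h = ⊤ }




/-- A subgroup is subnormal if it can be joined to the whole group
by a chain of successively normal subgroups. -/
def IsSubnormal [Group G] (H : Subgroup G) : Prop :=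
  ∃ (n : ℕ) (c : ℕ → Subgroup G), c 0 = H ∧ c n = ⊤ ∧
    ∀ i, c i ≤ c (i + 1) ∧ ∀ x ∈ c (i + 1), ∀ y ∈ c i, x * y * x⁻¹ ∈ c i

/-- A group is quasisimple if it is perfect and its central quotient
is a nonabelian simple group. -/
def IsQuasisimple (G : Type*) [Group G] : Prop :=
  commutator G = ⊤ ∧
    IsSimpleGroup (G ⧸ Subgroup.center G) ∧
    ∃ a b : G ⧸ Subgroup.center G, a * b ≠ b * a

theorem map_center_eq {H : Type*} [Group G] [Group H] (e : G ≃* H) :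
    (Subgroup.center G).map e.toMonoidHom = Subgroup.center H := by
  ext x
  simp only [Subgroup.mem_map, Subgroup.mem_center_iff, MulEquiv.coe_toMonoidHom]
  constructor
  · rintro ⟨y, hy, rfl⟩ h
    obtain ⟨z, rfl⟩ := e.surjective h
    rw [← map_mul, ← map_mul, hy z]
  · intro hx
    refine ⟨e.symm x, fun z => ?_, e.apply_symm_apply x⟩
    apply e.injective
    rw [map_mul, map_mul, e.apply_symm_apply]
    have := hx (e z)
    rw [this]

theorem isQuasisimple_congr {H : Type*} [Group G] [Group H] (e : G ≃* H)
    (h : IsQuasisimple G) : IsQuasisimple H := by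
  obtain ⟨hcomm, hsimp, a, b, hab⟩ := h
  have hcenter : (Subgroup.center G).map e.toMonoidHom = Subgroup.center H := map_center_eq e
  have equot : (G ⧸ Subgroup.center G) ≃* (H ⧸ Subgroup.center H) :=
    QuotientGroup.congr (Subgroup.center G) (Subgroup.center H) e hcenter
  refine ⟨?_, ?_, equot a, equot b, ?_⟩
  · have h1 : Subgroup.map e.toMonoidHom (commutator G) = commutator H := by
      rw [commutator_def, commutator_def, Subgroup.map_commutator,
        Subgroup.map_top_of_surjective _ e.surjective]
    rw [← h1, hcomm, Subgroup.map_top_of_surjective _ e.surjective]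
  · haveI := hsimp
    haveI : Nontrivial (H ⧸ Subgroup.center H) := by
      rcases hsimp.exists_pair_ne with ⟨u, v, huv⟩
      exact ⟨equot u, equot v, fun hh => huv (equot.injective hh)⟩
    exact IsSimpleGroup.isSimpleGroup_of_surjective equot.toMonoidHom equot.surjective
  · intro hcon
    apply hab
    apply equot.injective
    rw [map_mul, map_mul, hcon]

theorem isSubnormal_map_conj [Group G] {N : Subgroup G} (hN : IsSubnormal N) (w : G) :
    IsSubnormal (N.map (MulAut.conj w).toMonoidHom) := by
  obtain ⟨n, c, h0, hn, hc⟩ := hN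
  refine ⟨n, fun i => (c i).map (MulAut.conj w).toMonoidHom, by simp only [h0], ?_, ?_⟩
  · simp only [hn]
    exact Subgroup.map_top_of_surjective _ (MulAut.conj w).surjective
  · intro i
    refine ⟨Subgroup.map_mono (hc i).1, ?_⟩
    rintro x ⟨x', hx', rfl⟩ y ⟨y', hy', rfl⟩
    refine ⟨x' * y' * x'⁻¹, (hc i).2 x' hx' y' hy', ?_⟩
    simp [map_mul, map_inv]

/-- The generalized Fitting subgroup: the product of the Fitting subgroup and all
subnormal quasisimple subgroups. -/
def genFitting (G : Type*) [Group G] : Subgroup G :=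
  fitting G ⊔ sSup { N : Subgroup G | IsSubnormal N ∧ IsQuasisimple N }

theorem genFitting_normal (G : Type*) [Group G] : (genFitting G).Normal := by
  have h2 : (sSup { N : Subgroup G | IsSubnormal N ∧ IsQuasisimple N }).Normal := by
    apply normal_sSup_of_conj_invariant
    rintro N ⟨hsub, hqs⟩ g
    refine ⟨isSubnormal_map_conj hsub g, ?_⟩
    exact isQuasisimple_congr
      (Subgroup.equivMapOfInjective N _ (MulAut.conj g).injective) hqs
  haveI := fitting_normal G
  haveI := h2
  exact Subgroup.sup_normal _ _


/-- One step of the generalized Fitting series. -/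
def genFitStep (G : Type*) [Group G] (N : { N : Subgroup G // N.Normal }) :
    { N : Subgroup G // N.Normal } :=
  letI := N.2
  ⟨Subgroup.comap (QuotientGroup.mk' N.1) (genFitting (G ⧸ N.1)),
    (genFitting_normal (G ⧸ N.1)).comap _⟩

/-- The generalized Fitting series `F*_0(G) = 1`, `F*_{i+1}(G)/F*_i(G) = F*(G/F*_i(G))`. -/
def genFitSeries (G : Type*) [Group G] (n : ℕ) : Subgroup G :=
  ((genFitStep G)^[n] ⟨⊥, inferInstance⟩).1

/-- The generalized Fitting height: the least `h` with `F*_h(G) = G`. -/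
noncomputable def genFittingHeight (G : Type*) [Group G] : ℕ :=
  sInf { h | genFitSeries G h = ⊤ }

/-- The soluble radical: the subgroup generated by all soluble normal subgroups. -/
def solRadical (G : Type*) [Group G] : Subgroup G :=
  sSup { N : Subgroup G | N.Normal ∧ IsSolvable N }

theorem solRadical_normal (G : Type*) [Group G] : (solRadical G).Normal :=
  normal_sSup fun _ hN => hN.1

/-- A group is a nonabelian simple group. -/
def IsNonabelianSimple (G : Type*) [Group G] : Prop :=
  IsSimpleGroup G ∧ ∃ a b : G, a * b ≠ b * a

/-- A group is the (internal) direct product of finitely many nonabelian simple subgroups. -/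
def IsProdOfSimples (Q : Type*) [Group Q] : Prop :=
  ∃ (k : ℕ) (H : Fin k → Subgroup Q),
    (∀ i, (H i).Normal) ∧ (∀ i, IsNonabelianSimple (H i)) ∧
    iSup H = ⊤ ∧ iSupIndep H

/-- For `A ≤ B`, the factor `B/A` is soluble (stated for every proof that the
corresponding subgroup is normal). -/
def SolubleFactor [Group G] (A B : Subgroup G) : Prop :=
  ∀ h : (A.subgroupOf B).Normal, letI := h; IsSolvable (B ⧸ A.subgroupOf B)

/-- For `A ≤ B`, the factor `B/A` is a direct product of nonabelian simple groups. -/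
def SimpleProdFactor [Group G] (A B : Subgroup G) : Prop :=
  ∀ h : (A.subgroupOf B).Normal, letI := h; IsProdOfSimples (B ⧸ A.subgroupOf B)

/-- For `A ≤ B`, the factor `B/A` is nonabelian simple. -/
def NonabelianSimpleFactor [Group G] (A B : Subgroup G) : Prop :=
  ∀ h : (A.subgroupOf B).Normal, letI := h; IsNonabelianSimple (B ⧸ A.subgroupOf B)

/-- For `A ≤ B, B'`, the factors `B/A` and `B'/A` are isomorphic. -/
def IsoFactor [Group G] (A B B' : Subgroup G) : Prop :=
  ∀ (h : (A.subgroupOf B).Normal) (h' : (A.subgroupOf B').Normal),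
    letI := h; letI := h'
    Nonempty ((B ⧸ A.subgroupOf B) ≃* (B' ⧸ A.subgroupOf B'))

open scoped Classical in
/-- The nonsoluble length `λ(G)`: the minimum number of nonsoluble factors in a normal
series each of whose factors either is soluble or is a direct product of nonabelian
simple groups. -/
noncomputable def nonsolLength (G : Type*) [Group G] : ℕ :=
  sInf { k | ∃ (n : ℕ) (c : ℕ → Subgroup G), c 0 = ⊥ ∧ c n = ⊤ ∧
    (∀ i, c i ≤ c (i + 1)) ∧ (∀ i, (c i).Normal) ∧
    (∀ i < n, SolubleFactor (c i) (c (i + 1)) ∨ SimpleProdFactor (c i) (c (i + 1))) ∧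
    k = ((Finset.range n).filter fun i => ¬ SolubleFactor (c i) (c (i + 1))).card }

/-- `R_i(G)`: the maximal normal subgroup of `G` of nonsoluble length at most `i`. -/
noncomputable def Rsub (G : Type*) [Group G] (i : ℕ) : Subgroup G :=
  sSup { N : Subgroup G | N.Normal ∧ nonsolLength N ≤ i }

/-- One step of the upper nonsoluble series: from `R_{i-1}` to `L_i`
(the inverse image of the generalized Fitting subgroup of the quotient). -/
def unsStepL (G : Type*) [Group G] (R : { N : Subgroup G // N.Normal }) :
    { N : Subgroup G // N.Normal } :=
  letI := R.2
  ⟨Subgroup.comap (QuotientGroup.mk' R.1) (genFitting (G ⧸ R.1)),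
    (genFitting_normal (G ⧸ R.1)).comap _⟩

/-- One step of the upper nonsoluble series: from `L_i` to `R_i`
(the inverse image of the soluble radical of the quotient). -/
def unsStepR (G : Type*) [Group G] (L : { N : Subgroup G // N.Normal }) :
    { N : Subgroup G // N.Normal } :=
  letI := L.2
  ⟨Subgroup.comap (QuotientGroup.mk' L.1) (solRadical (G ⧸ L.1)),
    (solRadical_normal (G ⧸ L.1)).comap _⟩

/-- The terms `R_i` of the upper nonsoluble series, bundled with normality. -/
def unsRAux (G : Type*) [Group G] (n : ℕ) : { N : Subgroup G // N.Normal } :=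
  (fun P => unsStepR G (unsStepL G P))^[n] ⟨solRadical G, solRadical_normal G⟩

/-- The terms `R_i` of the upper nonsoluble series of `G`:
`R_0` is the soluble radical and `R_i/L_i` is the soluble radical of `G/L_i`. -/
def unsRsub (G : Type*) [Group G] (n : ℕ) : Subgroup G := (unsRAux G n).1

/-- The terms `L_i` of the upper nonsoluble series of `G`: `L_0 = 1` and
`L_i/R_{i-1} = F*(G/R_{i-1})` for `i ≥ 1`. -/
def unsLsub (G : Type*) [Group G] : ℕ → Subgroup G
  | 0 => ⊥
  | n + 1 => (unsStepL G (unsRAux G n)).1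

/-- `T` is (the full inverse image in `G` of) one of the simple factors of the
section `U_i = L_i/R_{i-1}` of the upper nonsoluble series (`i ≥ 1`): it satisfies
`R_{i-1} ≤ T ≤ L_i`, it is normalized by `L_i`, and `T/R_{i-1}` is nonabelian simple. -/
def IsSimpleFactor (G : Type*) [Group G] (i : ℕ) (T : Subgroup G) : Prop :=
  unsRsub G (i - 1) ≤ T ∧ T ≤ unsLsub G i ∧
  (∀ x ∈ unsLsub G i, ∀ t ∈ T, x * t * x⁻¹ ∈ T) ∧
  NonabelianSimpleFactor (unsRsub G (i - 1)) T

/-- The kernel `K_i` of the permutation action of `G` by conjugation on the set of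
simple factors of the section `U_i` of the upper nonsoluble series. -/
def unsKernel (G : Type*) [Group G] (i : ℕ) : Subgroup G where
  carrier := { w | ∀ T : Subgroup G, IsSimpleFactor G i T → ∀ x : G, x ∈ T ↔ w * x * w⁻¹ ∈ T }
  one_mem' := by intro T _ x; simp
  mul_mem' := by
    intro a b ha hb T hT x
    have h1 := hb T hT x
    have h2 := ha T hT (b * x * b⁻¹)
    have h3 : a * (b * x * b⁻¹) * a⁻¹ = (a * b) * x * (a * b)⁻¹ := by group
    rw [h3] at h2
    exact h1.trans h2
  inv_mem' := by
    intro a ha T hT x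
    have h1 := ha T hT (a⁻¹ * x * a)
    have h2 : a * (a⁻¹ * x * a) * a⁻¹ = x := by group
    rw [h2] at h1
    have h3 : a⁻¹ * x * a⁻¹⁻¹ = a⁻¹ * x * a := by rw [inv_inv]
    rw [h3]
    exact h1.symm

/-- The lexicographic order on positive integers from the paper: `a ≺ b` if for some
prime `p` the multiplicities of all primes `q < p` agree in `a` and `b` and the
multiplicity of `p` in `a` is smaller than in `b`. -/
def lexPrimeLt (a b : ℕ) : Prop :=
  ∃ p : ℕ, p.Prime ∧ (∀ q < p, q.Prime → a.factorization q = b.factorization q) ∧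
    a.factorization p < b.factorization p


/-- The subgroup of a direct product consisting of the elements supported on `J`. -/
def suppSubgroup {ι : Type*} {Δ : ι → Type*} [∀ i, Group (Δ i)] (J : Set ι) :
    Subgroup (∀ i, Δ i) where
  carrier := { x | ∀ i, i ∉ J → x i = 1 }
  one_mem' := fun _ _ => rfl
  mul_mem' := by
    intro a b ha hb i hi
    have := ha i hi; have := hb i hi
    simp_all [Pi.mul_apply]
  inv_mem' := by
    intro a ha i hi
    have := ha i hi
    simp_all [Pi.inv_apply]

/-- The `i`-th factor `S_i` of the direct product `S = S_1 × ⋯ × S_r`. -/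
def factorSub {ι : Type*} {Δ : ι → Type*} [∀ i, Group (Δ i)] (i : ι) :
    Subgroup (∀ j, Δ j) :=
  suppSubgroup {i}

/-- The homomorphism of a direct product killing all coordinates outside `I`. -/
def restrictSupp {ι : Type*} {Δ : ι → Type*} [∀ i, Group (Δ i)] (I : Set ι)
    [DecidablePred (· ∈ I)] : (∀ j, Δ j) →* (∀ j, Δ j) where
  toFun x j := if j ∈ I then x j else 1
  map_one' := by funext j; by_cases h : j ∈ I <;> simp [h]
  map_mul' := by
    intro a b; funext j; by_cases h : j ∈ I <;> simp [h]

/-- The fixed-point subgroup (in `S`) of an automorphism `φ`;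
for `φ` as in Hypothesis (*), this is the diagonal `D = C_S(φ)`. -/
def fixedSub {S : Type*} [Group S] (φ : MulAut S) : Subgroup S where
  carrier := { x | φ x = x }
  one_mem' := map_one φ
  mul_mem' := by
    intro a b ha hb
    simp only [Set.mem_setOf_eq, map_mul] at *
    rw [ha, hb]
  inv_mem' := by
    intro a ha
    simp only [Set.mem_setOf_eq, map_inv] at *
    rw [ha]

/-- The `d(I)`-subgroup determined by `φ` and a set of indices `I`: the diagonal
(with respect to `φ`) in the product of the factors `S_i`, `i ∈ I`; equivalently, the
image of the full diagonal `D = C_S(φ)` under the projection onto the coordinates in `I`. -/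
def dSubgroup {r : ℕ} {Δ : Type*} [Group Δ] (φ : MulAut (Fin r → Δ)) (I : Finset (Fin r)) :
    Subgroup (Fin r → Δ) :=
  Subgroup.map (restrictSupp (↑I : Set (Fin r))) (fixedSub φ)

/-- `K` is a `d`-subgroup (with respect to `φ`): a `d(I)`-subgroup for some nonempty `I`. -/
def IsDSubgroup {r : ℕ} {Δ : Type*} [Group Δ] (φ : MulAut (Fin r → Δ))
    (K : Subgroup (Fin r → Δ)) : Prop :=
  ∃ I : Finset (Fin r), I.Nonempty ∧ K = dSubgroup φ I

end EngelPaper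

section Statements

universe u

open EngelPaper

section Aux

open Fin.NatCast Fin.CommRing

variable {Δ : Type u} [Group Δ] {r : ℕ} [NeZero r]

theorem center_triv (hΔ : IsNonabelianSimple Δ) (z : Δ) (hz : ∀ b, z * b = b * z) : z = 1 := by
  obtain ⟨h, hab⟩ := hΔ
  have hc : Subgroup.center Δ = ⊥ ∨ Subgroup.center Δ = ⊤ :=
    h.eq_bot_or_eq_top_of_normal _ inferInstance
  rcases hc with hc | hc
  · have : z ∈ Subgroup.center Δ := Subgroup.mem_center_iff.mpr fun g => (hz g).symm
    rw [hc] at this; simpa using this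
  · obtain ⟨a, b, hab⟩ := hab
    exact absurd ((Subgroup.mem_center_iff.mp (hc ▸ Subgroup.mem_top a)) b).symm hab

theorem mem_factorSub_iff {i : Fin r} {x : Fin r → Δ} :
    x ∈ factorSub (Δ := fun _ : Fin r => Δ) i ↔ ∀ j, j ≠ i → x j = 1 := by
  constructor
  · intro h j hj
    exact h j (by simpa using hj)
  · intro h j hj
    exact h j (by simpa using hj)

theorem single_mem_factorSub (i : Fin r) (a : Δ) :
    Pi.mulSingle i a ∈ factorSub (Δ := fun _ : Fin r => Δ) i :=
  mem_factorSub_iff.mpr fun j hj => by simp [Pi.mulSingle_eq_of_ne hj]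

theorem factor_eq_single {i : Fin r} {x : Fin r → Δ} (h : x ∈ factorSub (Δ := fun _ : Fin r => Δ) i) :
    x = Pi.mulSingle i (x i) := by
  funext j
  by_cases hj : j = i
  · subst hj; simp
  · rw [mem_factorSub_iff.mp h j hj, Pi.mulSingle_eq_of_ne hj]

variable (φ : MulAut (Fin r → Δ))
variable (hperm : ∀ i : Fin r,
      Subgroup.map φ.toMonoidHom (factorSub (Δ := fun _ : Fin r => Δ) i) = factorSub (i + 1))

include hperm

theorem phi_factor_mem {i : Fin r} {x : Fin r → Δ}
    (h : x ∈ factorSub (Δ := fun _ : Fin r => Δ) i) : φ x ∈ factorSub (Δ := fun _ : Fin r => Δ) (i + 1) := by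
  rw [← hperm i]
  exact ⟨x, h, rfl⟩

theorem pow_factor_mem (k : ℕ) {i : Fin r} {x : Fin r → Δ}
    (h : x ∈ factorSub (Δ := fun _ : Fin r => Δ) i) :
    (φ ^ k) x ∈ factorSub (Δ := fun _ : Fin r => Δ) (i + (k : Fin r)) := by
  induction k with
  | zero => simpa using h
  | succ k ih =>
    have h1 : (φ ^ (k+1)) x = φ ((φ ^ k) x) := by rw [pow_succ']; rfl
    have : (↑(k+1) : Fin r) = (k : Fin r) + 1 := by push_cast; ring
    rw [h1, this, ← add_assoc]
    exact phi_factor_mem φ hperm ih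

theorem pow_factor_surj (k : ℕ) (i : Fin r) (b : Δ) :
    ∃ x ∈ factorSub (Δ := fun _ : Fin r => Δ) i,
      (φ ^ k) x = Pi.mulSingle (i + (k : Fin r)) b := by
  induction k generalizing b with
  | zero => exact ⟨Pi.mulSingle i b, single_mem_factorSub i b, by simp⟩
  | succ k ih =>
    have := hperm (i + (k : Fin r))
    have hb : Pi.mulSingle (i + (k : Fin r) + 1) b ∈
        Subgroup.map φ.toMonoidHom (factorSub (Δ := fun _ : Fin r => Δ) (i + (k : Fin r))) := by
      rw [this]; exact single_mem_factorSub _ b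
    obtain ⟨y, hy, hyb⟩ := hb
    obtain ⟨x, hx, hxk⟩ := ih (y (i + (k : Fin r)))
    refine ⟨x, hx, ?_⟩
    have h1 : (φ ^ (k+1)) x = φ ((φ ^ k) x) := by rw [pow_succ']; rfl
    have h2 : (↑(k+1) : Fin r) = (k : Fin r) + 1 := by push_cast; ring
    rw [h1, hxk, ← factor_eq_single hy, h2, ← add_assoc]
    exact hyb

theorem phi_supp {j : Fin r} {x : Fin r → Δ} (hΔ : IsNonabelianSimple Δ)
    (h : x j = 1) : (φ x) (j + 1) = 1 := by
  apply center_triv hΔ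
  intro b
  have hb : Pi.mulSingle (j+1) b ∈
      Subgroup.map φ.toMonoidHom (factorSub (Δ := fun _ : Fin r => Δ) j) := by
    rw [hperm j]; exact single_mem_factorSub _ b
  obtain ⟨y, hy, hyb⟩ := hb
  have hyb' : φ y = Pi.mulSingle (j+1) b := hyb
  have hcomm : x * y = y * x := by
    funext m
    by_cases hm : m = j
    · subst hm; simp [Pi.mul_apply, h]
    · simp [Pi.mul_apply, mem_factorSub_iff.mp hy m hm]
  have := congrFun (congrArg (⇑φ) hcomm) (j + 1)
  simp only [map_mul, Pi.mul_apply, hyb'] at this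
  simpa using this

theorem phi_apply (hΔ : IsNonabelianSimple Δ) (x : Fin r → Δ) (j : Fin r) :
    (φ x) (j + 1) = (φ (Pi.mulSingle j (x j))) (j + 1) := by
  set y : Fin r → Δ := x * (Pi.mulSingle j (x j))⁻¹ with hydef
  have hy : y j = 1 := by simp [hydef, Pi.mul_apply]
  have h1 := phi_supp φ hperm hΔ hy
  have hx : x = y * Pi.mulSingle j (x j) := by rw [hydef]; group
  calc (φ x) (j+1) = (φ (y * Pi.mulSingle j (x j))) (j+1) := by rw [← hx]
    _ = (φ y) (j+1) * (φ (Pi.mulSingle j (x j))) (j+1) := by rw [map_mul]; rfl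
    _ = (φ (Pi.mulSingle j (x j))) (j+1) := by rw [h1, one_mul]

/-- The `φ`-diagonal element through `a` at position `i`. -/
def diag (i : Fin r) (a : Δ) : Fin r → Δ :=
  fun j => (φ ^ (j - i : Fin r).val) (Pi.mulSingle i a) j

omit hperm in
theorem diag_apply_self (i : Fin r) (a : Δ) : diag φ i a i = a := by
  simp [diag]

theorem diag_apply_mem (i j : Fin r) (a : Δ) :
    (φ ^ (j - i : Fin r).val) (Pi.mulSingle i a) ∈ factorSub (Δ := fun _ : Fin r => Δ) j := by
  have := pow_factor_mem φ hperm ((j - i : Fin r).val) (single_mem_factorSub i a)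
  rwa [Fin.cast_val_eq_self, add_sub_cancel] at this

variable (hord : orderOf φ = r)
include hord

theorem pow_cycle (k : ℕ) (hk : k < r) :
    φ ^ ((Fin.mk k hk + (1:Fin r)).val) = φ ^ (k + 1) := by
  have h1 : ((Fin.mk k hk + (1:Fin r)).val) = (k + (1:Fin r).val) % r := by
    rw [Fin.add_def]
  have h2 : (k + (1:Fin r).val) % r = (k + 1) % r := by
    rw [Fin.val_one']
    conv_rhs => rw [Nat.add_mod]
    rw [Nat.mod_eq_of_lt hk]
  have h3 := pow_mod_orderOf φ (k+1)
  rw [hord] at h3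
  rw [h1, h2, h3]

theorem diag_mem_fixed (hΔ : IsNonabelianSimple Δ) (i : Fin r) (a : Δ) :
    diag φ i a ∈ fixedSub φ := by
  show φ (diag φ i a) = diag φ i a
  funext m
  obtain ⟨j, rfl⟩ : ∃ j, m = j + 1 := ⟨m - 1, by ring⟩
  rw [phi_apply φ hperm hΔ]
  have hmem := diag_apply_mem φ hperm i j a
  have heq : Pi.mulSingle j (diag φ i a j) = (φ ^ (j - i : Fin r).val) (Pi.mulSingle i a) :=
    (factor_eq_single hmem).symm
  rw [heq]
  show (φ ((φ ^ (j - i : Fin r).val) (Pi.mulSingle i a))) (j+1) = (φ ^ ((j+1) - i : Fin r).val) (Pi.mulSingle i a) (j+1)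
  have h1 : φ ((φ ^ (j - i : Fin r).val) (Pi.mulSingle i a)) = (φ ^ ((j - i : Fin r).val + 1)) (Pi.mulSingle i a) := by
    rw [pow_succ']; rfl
  have h2 : ((j+1) - i : Fin r) = (j - i) + 1 := by ring
  have h3 : φ ^ (((j - i : Fin r) + 1).val) = φ ^ ((j - i : Fin r).val + 1) := by
    have := pow_cycle φ hperm hord (j - i : Fin r).val (Fin.is_lt _)
    simpa [Fin.eta] using this
  rw [h1, h2, ← h3]

theorem fixed_ext (hΔ : IsNonabelianSimple Δ) {d d' : Fin r → Δ}
    (hd : d ∈ fixedSub φ) (hd' : d' ∈ fixedSub φ) (i : Fin r)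
    (h : d i = d' i) : d = d' := by
  have hy : d * d'⁻¹ ∈ fixedSub φ := mul_mem hd (inv_mem hd')
  have hyi : (d * d'⁻¹) i = 1 := by simp [Pi.mul_apply, h]
  have key : ∀ k : ℕ, (d * d'⁻¹) (i + (k : Fin r)) = 1 := by
    intro k
    induction k with
    | zero => simpa using hyi
    | succ k ih =>
      have h2 : (↑(k+1) : Fin r) = (k : Fin r) + 1 := by push_cast; ring
      rw [h2, ← add_assoc]
      have := phi_supp φ hperm hΔ ih
      rwa [show φ (d * d'⁻¹) = d * d'⁻¹ from hy] at this
  have : d * d'⁻¹ = 1 := by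
    funext j
    have := key (j - i : Fin r).val
    rwa [Fin.cast_val_eq_self, add_sub_cancel] at this
  have := mul_inv_eq_one.mp this
  exact this

theorem fixed_eq_diag (hΔ : IsNonabelianSimple Δ) {d : Fin r → Δ}
    (hd : d ∈ fixedSub φ) (i : Fin r) : d = diag φ i (d i) :=
  fixed_ext φ hperm hord hΔ hd (diag_mem_fixed φ hperm hord hΔ i (d i)) i
    (by rw [diag_apply_self])

variable (I : Finset (Fin r))

theorem mem_dSubgroup_iff (hΔ : IsNonabelianSimple Δ) (i0 : Fin r) (hi0 : i0 ∈ I)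
    (x : Fin r → Δ) :
    x ∈ dSubgroup φ I ↔ ∃ a : Δ, x = restrictSupp (↑I : Set (Fin r)) (diag φ i0 a) := by
  constructor
  · rintro ⟨d, hd, rfl⟩
    exact ⟨d i0, by rw [← fixed_eq_diag φ hperm hord hΔ hd i0]⟩
  · rintro ⟨a, rfl⟩
    exact ⟨diag φ i0 a, diag_mem_fixed φ hperm hord hΔ i0 a, rfl⟩

omit hperm hord in
theorem restrict_apply_mem {x : Fin r → Δ} {j : Fin r} (hj : j ∈ I) :
    restrictSupp (↑I : Set (Fin r)) x j = x j := by
  simp [restrictSupp, hj]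

omit hperm hord in
theorem restrict_apply_not_mem {x : Fin r → Δ} {j : Fin r} (hj : j ∉ I) :
    restrictSupp (↑I : Set (Fin r)) x j = 1 := by
  simp [restrictSupp, hj]

omit hord in
theorem diag_coord_mul (i j : Fin r) (a b : Δ) :
    diag φ i (a * b) j = diag φ i a j * diag φ i b j := by
  unfold diag
  rw [show (Pi.mulSingle i (a*b) : Fin r → Δ) = Pi.mulSingle i a * Pi.mulSingle i b by
    funext m; by_cases hm : m = i
    · subst hm; simp [Pi.mul_apply]
    · simp [Pi.mul_apply, Pi.mulSingle_eq_of_ne hm]]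
  rw [map_mul]
  rfl

omit hord in
theorem diag_coord_surj (i j : Fin r) (b : Δ) : ∃ a : Δ, diag φ i a j = b := by
  obtain ⟨x, hx, hxk⟩ := pow_factor_surj φ hperm ((j - i : Fin r).val) i b
  have hij : i + ((((j - i : Fin r).val) : ℕ) : Fin r) = j := by
    rw [Fin.cast_val_eq_self, add_sub_cancel]
  refine ⟨x i, ?_⟩
  unfold diag
  rw [← factor_eq_single hx, hxk, hij]
  simp

omit hord in
theorem diag_coord_one (i j : Fin r) : diag φ i (1:Δ) j = 1 := by
  unfold diag
  rw [show (Pi.mulSingle i (1:Δ) : Fin r → Δ) = 1 by funext m; by_cases hm : m = i <;> simp [hm]]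
  simp

omit hord in
theorem diag_coord_inv (i j : Fin r) (a : Δ) : diag φ i a⁻¹ j = (diag φ i a j)⁻¹ := by
  have := diag_coord_mul φ hperm i j a a⁻¹
  rw [mul_inv_cancel, diag_coord_one φ hperm] at this
  exact eq_inv_of_mul_eq_one_right this.symm

end Aux

/-- **Lemma 3.4.** Under Hypothesis (*), for the `d(I)`-subgroup `K`, the centralizer
`C_S(K)` is the product of the factors `S_i` with `i ∉ I`, and `N_S(K) = K × C_S(K)`. -/
theorem stmt7 {Δ : Type u} [Group Δ] [Finite Δ] (hΔ : IsNonabelianSimple Δ)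
    (r : ℕ) [NeZero r] (φ : MulAut (Fin r → Δ)) (hord : orderOf φ = r)
    (hperm : ∀ i : Fin r,
      Subgroup.map φ.toMonoidHom (factorSub (Δ := fun _ : Fin r => Δ) i) = factorSub (i + 1))
    (I : Finset (Fin r)) (hI : I.Nonempty)
    (K : Subgroup (Fin r → Δ)) (hK : K = dSubgroup φ I) :
    Subgroup.centralizer (K : Set (Fin r → Δ)) = suppSubgroup ((↑I : Set (Fin r))ᶜ) ∧
    Subgroup.normalizer (K : Set (Fin r → Δ)) = K ⊔ Subgroup.centralizer (K : Set (Fin r → Δ)) ∧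
    Disjoint K (Subgroup.centralizer (K : Set (Fin r → Δ))) := by
  subst hK
  obtain ⟨i0, hi0⟩ := hI
  have memK := mem_dSubgroup_iff φ hperm hord I hΔ i0 hi0
  -- Part 1 : centralizer
  have hcent : Subgroup.centralizer ((dSubgroup φ I : Subgroup (Fin r → Δ)) : Set (Fin r → Δ))
      = suppSubgroup ((↑I : Set (Fin r))ᶜ) := by
    ext c
    constructor
    · intro hc
      intro i hi
      have hiI : i ∈ I := by simpa using hi
      apply center_triv hΔ
      intro b
      obtain ⟨a, ha⟩ := diag_coord_surj φ hperm i0 i b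
      have hx : restrictSupp (↑I : Set (Fin r)) (diag φ i0 a) ∈ dSubgroup φ I :=
        (memK _).mpr ⟨a, rfl⟩
      have := Subgroup.mem_centralizer_iff.mp hc _ hx
      have := congrFun this i
      simp only [Pi.mul_apply] at this
      rw [restrict_apply_mem I hiI, ha] at this
      exact this.symm
    · intro hc
      rw [Subgroup.mem_centralizer_iff]
      intro h hh
      obtain ⟨a, rfl⟩ := (memK h).mp hh
      funext j
      simp only [Pi.mul_apply]
      by_cases hj : j ∈ I
      · have : c j = 1 := hc j (by simpa using hj)
        rw [this, mul_one, one_mul]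
      · rw [restrict_apply_not_mem I hj, mul_one, one_mul]
  refine ⟨hcent, ?_, ?_⟩
  -- Part 2 : normalizer
  · have hCleN : Subgroup.centralizer ((dSubgroup φ I : Subgroup (Fin r → Δ)) : Set (Fin r → Δ))
        ≤ Subgroup.normalizer ((dSubgroup φ I : Subgroup (Fin r → Δ)) : Set (Fin r → Δ)) := by
      intro c hc
      rw [Subgroup.mem_normalizer_iff]
      intro h
      constructor
      · intro hh
        have hcomm := Subgroup.mem_centralizer_iff.mp hc h hh
        have : c * h * c⁻¹ = h := by rw [← hcomm]; group
        rwa [this]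
      · intro hh
        have hcomm := Subgroup.mem_centralizer_iff.mp hc _ hh
        have h1 : h = c⁻¹ * (c * h * c⁻¹) * c := by group
        have h2 : c⁻¹ * (c * h * c⁻¹) * c = c * h * c⁻¹ := by
          rw [mul_assoc, hcomm]; group
        rw [h1, h2]; exact hh
    apply le_antisymm
    · intro w hw
      rw [Subgroup.mem_normalizer_iff] at hw
      set u : Fin r → Δ := fun j => if j ∈ I then w j else 1 with hu_def
      set v : Fin r → Δ := fun j => if j ∈ I then 1 else w j with hv_def
      have huv : w = u * v := by
        funext j
        by_cases hj : j ∈ I <;> simp [hu_def, hv_def, Pi.mul_apply, hj]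
      have hv : v ∈ Subgroup.centralizer
          ((dSubgroup φ I : Subgroup (Fin r → Δ)) : Set (Fin r → Δ)) := by
        rw [hcent]
        intro i hi
        have : i ∈ I := by simpa using hi
        simp [hv_def, this]
      -- u normalizes K
      have hu_norm : ∀ x ∈ dSubgroup φ I, u * x * u⁻¹ ∈ dSubgroup φ I := by
        intro x hx
        have hvx : x * v = v * x := Subgroup.mem_centralizer_iff.mp hv x hx
        have hueq : u = w * v⁻¹ := by rw [huv]; group
        have : u * x * u⁻¹ = w * (v⁻¹ * x * v) * w⁻¹ := by rw [hueq]; group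
        have hvxv : v⁻¹ * x * v = x := by
          have h3 : v⁻¹ * x * v = v⁻¹ * (x * v) := by group
          rw [h3, hvx]; group
        rw [this, hvxv]
        exact (hw x).mp hx
      -- key conjugation identity
      have hkey : ∀ j ∈ I, ∀ a : Δ,
          u j * diag φ i0 a j * (u j)⁻¹ = diag φ i0 (u i0 * a * (u i0)⁻¹) j := by
        intro j hj a
        have hx : restrictSupp (↑I : Set (Fin r)) (diag φ i0 a) ∈ dSubgroup φ I :=
          (memK _).mpr ⟨a, rfl⟩
        obtain ⟨a', ha'⟩ := (memK _).mp (hu_norm _ hx)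
        have hi0' := congrFun ha' i0
        simp only [Pi.mul_apply, Pi.inv_apply] at hi0'
        rw [restrict_apply_mem I hi0, restrict_apply_mem I hi0] at hi0'
        simp only [diag_apply_self] at hi0'
        have hj' := congrFun ha' j
        simp only [Pi.mul_apply, Pi.inv_apply] at hj'
        rw [restrict_apply_mem I hj, restrict_apply_mem I hj] at hj'
        rw [hj', hi0']
      -- u lies in K
      have hu_mem : u ∈ dSubgroup φ I := by
        apply (memK u).mpr
        refine ⟨u i0, ?_⟩
        funext j
        by_cases hj : j ∈ I
        · rw [restrict_apply_mem I hj]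
          set g1 := u j
          set g2 := diag φ i0 (u i0) j with hg2
          have hconj : ∀ b : Δ, g1 * b * g1⁻¹ = g2 * b * g2⁻¹ := by
            intro b
            obtain ⟨a, rfl⟩ := diag_coord_surj φ hperm i0 j b
            rw [hkey j hj a, hg2]
            rw [diag_coord_mul φ hperm, diag_coord_mul φ hperm, diag_coord_inv φ hperm]
          have hz : g2⁻¹ * g1 = 1 := by
            apply center_triv hΔ
            intro b
            calc g2⁻¹ * g1 * b = g2⁻¹ * (g1 * b * g1⁻¹) * g1 := by group
              _ = g2⁻¹ * (g2 * b * g2⁻¹) * g1 := by rw [hconj b]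
              _ = b * (g2⁻¹ * g1) := by group
          exact (inv_mul_eq_one.mp hz).symm
        · rw [restrict_apply_not_mem I hj]
          simp [hu_def, hj]
      rw [huv]
      exact Subgroup.mul_mem_sup hu_mem hv
    · exact sup_le Subgroup.le_normalizer hCleN
  -- Part 3 : disjointness
  · rw [Subgroup.disjoint_def]
    intro x hx hc
    rw [hcent] at hc
    obtain ⟨a, rfl⟩ := (memK _).mp hx
    funext j
    by_cases hj : j ∈ I
    · exact hc j (by simpa using hj)
    · exact restrict_apply_not_mem I hj


end Statements
end

section
/- Assume Hypothesis (*). Suppose K is a d-subgroup of S and x ∈ S is such that K^x is also a d-subgroup. Then x ∈ N_S(K). -/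
namespace EngelAux
open EngelPaper

universe u
variable {Δ : Type u} [Group Δ]
open Fin.NatCast

lemma mem_factorSub_iff {r : ℕ} (i : Fin r) (x : Fin r → Δ) :
    x ∈ factorSub (Δ := fun _ : Fin r => Δ) i ↔ ∀ j, j ≠ i → x j = 1 := by
  constructor
  · intro hx j hj
    exact hx j (by simpa using hj)
  · intro hx j hj
    exact hx j (by simpa using hj)

lemma commute_factorSub {r : ℕ} {p q : Fin r} (hpq : p ≠ q) {x y : Fin r → Δ}
    (hx : x ∈ factorSub (Δ := fun _ : Fin r => Δ) p)
    (hy : y ∈ factorSub (Δ := fun _ : Fin r => Δ) q) :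
    Commute x y := by
  rw [mem_factorSub_iff] at hx hy
  funext j
  by_cases hjp : j = p
  · have : y j = 1 := hy j (by rw [hjp]; exact hpq)
    simp [Pi.mul_apply, this]
  · have : x j = 1 := hx j hjp
    simp [Pi.mul_apply, this]

lemma map_pow_factorSub {r : ℕ} [NeZero r] (φ : MulAut (Fin r → Δ))
    (hperm : ∀ i : Fin r,
      Subgroup.map φ.toMonoidHom (factorSub (Δ := fun _ : Fin r => Δ) i) = factorSub (i + 1))
    (i : Fin r) (k : ℕ) :
    Subgroup.map (φ ^ k).toMonoidHom (factorSub (Δ := fun _ : Fin r => Δ) i)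
      = factorSub (i + (k : Fin r)) := by
  induction k with
  | zero =>
      ext x
      simp [Subgroup.mem_map]
  | succ k ih =>
      have hcomp : (φ ^ (k + 1)).toMonoidHom
          = φ.toMonoidHom.comp (φ ^ k).toMonoidHom := by
        ext x
        simp [pow_succ']
      rw [hcomp, ← Subgroup.map_map, ih, hperm]
      have : ((k + 1 : ℕ) : Fin r) = (k : Fin r) + 1 := by push_cast; ring
      rw [this, add_assoc]

lemma pow_apply_mem {r : ℕ} [NeZero r] (φ : MulAut (Fin r → Δ))
    (hperm : ∀ i : Fin r,
      Subgroup.map φ.toMonoidHom (factorSub (Δ := fun _ : Fin r => Δ) i) = factorSub (i + 1))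
    {i : Fin r} {u : Fin r → Δ} (hu : u ∈ factorSub (Δ := fun _ : Fin r => Δ) i) (k : ℕ) :
    (φ ^ k) u ∈ factorSub (Δ := fun _ : Fin r => Δ) (i + (k : Fin r)) := by
  rw [← map_pow_factorSub φ hperm i k]
  exact ⟨u, hu, rfl⟩

lemma exists_fixed_coord {r : ℕ} [NeZero r] (φ : MulAut (Fin r → Δ))
    (hord : orderOf φ = r)
    (hperm : ∀ i : Fin r,
      Subgroup.map φ.toMonoidHom (factorSub (Δ := fun _ : Fin r => Δ) i) = factorSub (i + 1))
    (i : Fin r) (a : Δ) :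
    ∃ h, h ∈ fixedSub φ ∧ h i = a := by
  classical
  set u : Fin r → Δ := Pi.mulSingle (M := fun _ : Fin r => Δ) i a with hu
  have hu_mem : u ∈ factorSub (Δ := fun _ : Fin r => Δ) i := by
    rw [mem_factorSub_iff]
    intro j hj
    rw [hu]
    exact Pi.mulSingle_eq_of_ne (M := fun _ : Fin r => Δ) hj a
  have hr : 0 < r := Nat.pos_of_ne_zero (NeZero.ne r)
  have hφr : φ ^ r = 1 := by
    have := pow_orderOf_eq_one φ
    rwa [hord] at this
  have hne : ∀ k : ℕ, 0 < k → k < r → i + (k : Fin r) ≠ i := by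
    intro k hk0 hkr heq
    have h0 : (k : Fin r) = 0 := by rwa [add_eq_left] at heq
    rw [Fin.natCast_eq_zero] at h0
    exact absurd (Nat.le_of_dvd hk0 h0) (by omega)
  obtain ⟨m, rfl⟩ : ∃ m, r = m + 1 := ⟨r - 1, by omega⟩
  set A : List (Fin (m + 1) → Δ) :=
    (List.range m).map (fun k => (φ ^ (k + 1)) u) with hA
  set h : Fin (m + 1) → Δ := (((List.range (m + 1)).map fun k => (φ ^ k) u)).prod with hh
  have hsplit : h = u * A.prod := by
    rw [hh, List.range_succ_eq_map, List.map_cons, List.map_map, List.prod_cons]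
    congr 1
  have hAcomm : Commute u A.prod := by
    apply Commute.list_prod_right
    intro y hy
    rw [hA, List.mem_map] at hy
    obtain ⟨k, hk, rfl⟩ := hy
    rw [List.mem_range] at hk
    exact commute_factorSub (Ne.symm (hne (k + 1) (by omega) (by omega))) hu_mem
      (pow_apply_mem φ hperm hu_mem (k + 1))
  refine ⟨h, ?_, ?_⟩
  · show φ h = h
    have hmap : φ h = (((List.range (m + 1)).map fun k => (φ ^ (k + 1)) u)).prod := by
      rw [hh, map_list_prod φ, List.map_map]
      congr 1
      apply List.map_congr_left
      intro k _
      show φ ((φ ^ k) u) = (φ ^ (k + 1)) u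
      rw [pow_succ']
      rfl
    have hlast : (φ ^ (m + 1)) u = u := by rw [hφr]; rfl
    rw [hmap, List.range_succ, List.map_append, List.prod_append, List.map_singleton,
      List.prod_singleton, hlast, ← hA, ← hAcomm.eq, ← hsplit]
  · have : h i = u i * (A.map (fun f => f i)).prod := by
      rw [hsplit, Pi.mul_apply, Pi.list_prod_apply]
    rw [this]
    have hi1 : (A.map (fun f => f i)).prod = 1 := by
      apply List.prod_eq_one
      intro y hy
      rw [List.map_map, List.mem_map] at hy
      obtain ⟨k, hk, rfl⟩ := hy
      rw [List.mem_range] at hk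
      have hmem := pow_apply_mem φ hperm hu_mem (k + 1)
      rw [mem_factorSub_iff] at hmem
      exact hmem i (Ne.symm (hne (k + 1) (by omega) (by omega)))
    rw [hi1, mul_one, hu]
    simp

lemma restrictSupp_apply {r : ℕ} (I : Finset (Fin r)) (g : Fin r → Δ) (j : Fin r) :
    restrictSupp (Δ := fun _ : Fin r => Δ) (↑I : Set (Fin r)) g j
      = if j ∈ (↑I : Set (Fin r)) then g j else 1 := rfl

lemma mem_dSupport_iff {r : ℕ} [NeZero r] [Nontrivial Δ] (φ : MulAut (Fin r → Δ))
    (hord : orderOf φ = r)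
    (hperm : ∀ i : Fin r,
      Subgroup.map φ.toMonoidHom (factorSub (Δ := fun _ : Fin r => Δ) i) = factorSub (i + 1))
    (I : Finset (Fin r)) (i : Fin r) :
    i ∈ I ↔ ∃ h ∈ dSubgroup φ I, h i ≠ 1 := by
  constructor
  · intro hiI
    obtain ⟨a, ha⟩ := exists_ne (1 : Δ)
    obtain ⟨h, hh, hhi⟩ := exists_fixed_coord φ hord hperm i a
    refine ⟨restrictSupp (↑I : Set (Fin r)) h, ⟨h, hh, rfl⟩, ?_⟩
    rw [restrictSupp_apply, if_pos (by simpa using hiI), hhi]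
    exact ha
  · rintro ⟨h, ⟨g, _, rfl⟩, hne⟩
    by_contra hiI
    exact hne (by rw [restrictSupp_apply, if_neg (by simpa using hiI)])

end EngelAux


section Statements

universe u

open EngelPaper

/-- **Lemma 3.5.** Under Hypothesis (*), if `K` and `K^x` are `d`-subgroups then
`x ∈ N_S(K)`. -/
theorem stmt8 {Δ : Type u} [Group Δ] [Finite Δ] (hΔ : IsNonabelianSimple Δ)
    (r : ℕ) [NeZero r] (φ : MulAut (Fin r → Δ)) (hord : orderOf φ = r)
    (hperm : ∀ i : Fin r,
      Subgroup.map φ.toMonoidHom (factorSub (Δ := fun _ : Fin r => Δ) i) = factorSub (i + 1))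
    (K : Subgroup (Fin r → Δ)) (hK : IsDSubgroup φ K) (x : Fin r → Δ)
    (hKx : IsDSubgroup φ (Subgroup.map (MulAut.conj x⁻¹).toMonoidHom K)) :
    x ∈ Subgroup.normalizer (K : Set (Fin r → Δ)) := by
  haveI : IsSimpleGroup Δ := hΔ.1
  obtain ⟨I, hInem, rfl⟩ := hK
  obtain ⟨J, hJnem, hJ⟩ := hKx
  -- conjugation preserves coordinatewise supports
  have hconj : ∀ (h : Fin r → Δ) (i : Fin r),
      ((MulAut.conj x⁻¹).toMonoidHom h) i = (x i)⁻¹ * h i * x i := by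
    intro h i
    simp [MulAut.conj_apply]
  have hsup : ∀ i : Fin r,
      (∃ h ∈ Subgroup.map (MulAut.conj x⁻¹).toMonoidHom (dSubgroup φ I), h i ≠ 1)
        ↔ ∃ h ∈ dSubgroup φ I, h i ≠ 1 := by
    intro i
    constructor
    · rintro ⟨h, ⟨g, hg, rfl⟩, hne⟩
      refine ⟨g, hg, fun hgi => hne ?_⟩
      rw [hconj, hgi]
      group
    · rintro ⟨g, hg, hne⟩
      refine ⟨_, ⟨g, hg, rfl⟩, fun hgi => hne ?_⟩
      rw [hconj] at hgi
      have : g i = x i * ((x i)⁻¹ * g i * x i) * (x i)⁻¹ := by group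
      rw [this, hgi]
      group
  have hIJ : I = J := by
    ext i
    rw [EngelAux.mem_dSupport_iff φ hord hperm I i,
      EngelAux.mem_dSupport_iff φ hord hperm J i, ← hJ, hsup]
  have hKK : Subgroup.map (MulAut.conj x⁻¹).toMonoidHom (dSubgroup φ I) = dSubgroup φ I := by
    rw [hJ, hIJ]
  rw [Subgroup.mem_normalizer_iff]
  intro h
  have hmem : ∀ g : Fin r → Δ, g ∈ dSubgroup φ I ↔
      (MulAut.conj x⁻¹).toMonoidHom g ∈ dSubgroup φ I := by
    intro g
    conv_rhs => rw [← hKK]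
    exact (Subgroup.mem_map_iff_mem
      (f := (MulAut.conj x⁻¹).toMonoidHom)
      (fun a b hab => (MulAut.conj x⁻¹).injective hab)).symm
  rw [hmem (x * h * x⁻¹)]
  have : (MulAut.conj x⁻¹).toMonoidHom (x * h * x⁻¹) = h := by
    simp [MulAut.conj_apply]
    group
  rw [this]

end Statements
end

section
/- Assume Hypothesis (*). Let H be a subgroup of S isomorphic to S_1 and suppose H is normalized by the diagonal D = C_S(φ). Then H is a d-subgroup of S. -/
section Statements

universe u

open EngelPaper

set_option linter.unusedSectionVars false

namespace Stmt9Aux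

open EngelPaper
open scoped Fin.NatCast Fin.CommRing

variable {Δ : Type*} [Group Δ] {r : ℕ} [NeZero r]

theorem center_triv (hΔ : IsNonabelianSimple Δ) {z : Δ} (hz : ∀ t : Δ, z * t = t * z) :
    z = 1 := by
  haveI := hΔ.1
  have hmem : z ∈ Subgroup.center Δ := Subgroup.mem_center_iff.mpr fun g => (hz g).symm
  rcases (inferInstance : (Subgroup.center Δ).Normal).eq_bot_or_eq_top with h | h
  · rw [h] at hmem; exact Subgroup.mem_bot.mp hmem
  · obtain ⟨a, b, hab⟩ := hΔ.2
    exfalso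
    apply hab
    have hb : b ∈ Subgroup.center Δ := by rw [h]; trivial
    exact Subgroup.mem_center_iff.mp hb a

theorem mem_factorSub {x : Fin r → Δ} {i : Fin r} :
    x ∈ factorSub (Δ := fun _ : Fin r => Δ) i ↔ ∀ j, j ≠ i → x j = 1 := by
  constructor
  · intro hx j hj
    exact hx j (by simpa using hj)
  · intro hx j hj
    exact hx j (by simpa using hj)

theorem mulSingle_mem_factorSub (i : Fin r) (a : Δ) :
    Pi.mulSingle i a ∈ factorSub (Δ := fun _ : Fin r => Δ) i :=
  mem_factorSub.mpr fun j hj => by rw [Pi.mulSingle_eq_of_ne hj]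

/-- The automorphism of `Δ` induced by `φ` between factor `i` and factor `i+1`. -/
def alphaFn (φ : MulAut (Fin r → Δ)) (i : Fin r) (a : Δ) : Δ :=
  φ (Pi.mulSingle i a) (i + 1)

variable (φ : MulAut (Fin r → Δ))

theorem phi_mulSingle
    (hperm : ∀ i : Fin r,
      Subgroup.map φ.toMonoidHom (factorSub (Δ := fun _ : Fin r => Δ) i) = factorSub (i + 1))
    (i : Fin r) (a : Δ) :
    φ (Pi.mulSingle i a) = Pi.mulSingle (i + 1) (alphaFn φ i a) := by
  have hmem : φ (Pi.mulSingle i a) ∈ factorSub (Δ := fun _ : Fin r => Δ) (i + 1) := by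
    rw [← hperm i]
    exact ⟨_, mulSingle_mem_factorSub i a, rfl⟩
  funext j
  by_cases hj : j = i + 1
  · subst hj; rw [Pi.mulSingle_eq_same]; rfl
  · rw [Pi.mulSingle_eq_of_ne hj]
    exact mem_factorSub.mp hmem j hj

theorem alphaFn_mul (i : Fin r) (a b : Δ) :
    alphaFn φ i (a * b) = alphaFn φ i a * alphaFn φ i b := by
  unfold alphaFn
  rw [Pi.mulSingle_mul, map_mul]
  rfl

theorem alphaFn_one (i : Fin r) : alphaFn φ i 1 = 1 := by
  unfold alphaFn
  rw [Pi.mulSingle_one, map_one]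
  rfl

theorem alphaFn_surj
    (hperm : ∀ i : Fin r,
      Subgroup.map φ.toMonoidHom (factorSub (Δ := fun _ : Fin r => Δ) i) = factorSub (i + 1))
    (i : Fin r) (c : Δ) : ∃ a, alphaFn φ i a = c := by
  have hmem : Pi.mulSingle (i + 1) c ∈
      Subgroup.map φ.toMonoidHom (factorSub (Δ := fun _ : Fin r => Δ) i) := by
    rw [hperm i]; exact mulSingle_mem_factorSub _ _
  obtain ⟨x, hx, hfx⟩ := hmem
  have hx' : Pi.mulSingle i (x i) = x := by
    funext j
    by_cases hj : j = i
    · subst hj; rw [Pi.mulSingle_eq_same]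
    · rw [Pi.mulSingle_eq_of_ne hj]
      exact (mem_factorSub.mp hx j hj).symm
  refine ⟨x i, ?_⟩
  unfold alphaFn
  rw [hx']
  rw [show (φ.toMonoidHom x : Fin r → Δ) = φ x from rfl] at hfx
  rw [hfx, Pi.mulSingle_eq_same]

theorem phi_coord_one (hΔ : IsNonabelianSimple Δ)
    (hperm : ∀ i : Fin r,
      Subgroup.map φ.toMonoidHom (factorSub (Δ := fun _ : Fin r => Δ) i) = factorSub (i + 1))
    {x : Fin r → Δ} {j : Fin r} (hx : x (j - 1) = 1) : φ x j = 1 := by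
  apply center_triv hΔ
  intro t
  obtain ⟨c, hc⟩ := alphaFn_surj φ hperm (j - 1) t
  have hcomm : x * Pi.mulSingle (j - 1) c = Pi.mulSingle (j - 1) c * x := by
    funext k
    by_cases hk : k = j - 1
    · subst hk
      simp [Pi.mul_apply, hx]
    · simp [Pi.mul_apply, Pi.mulSingle_eq_of_ne hk]
  have hcomm2 := congrArg (⇑φ) hcomm
  rw [map_mul, map_mul, phi_mulSingle φ hperm, show j - 1 + 1 = j by ring, hc] at hcomm2
  have h3 := congrFun hcomm2 j
  simpa [Pi.mul_apply] using h3

theorem phi_apply (hΔ : IsNonabelianSimple Δ)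
    (hperm : ∀ i : Fin r,
      Subgroup.map φ.toMonoidHom (factorSub (Δ := fun _ : Fin r => Δ) i) = factorSub (i + 1))
    (x : Fin r → Δ) (j : Fin r) :
    φ x j = alphaFn φ (j - 1) (x (j - 1)) := by
  set m : Fin r → Δ := Pi.mulSingle (j - 1) (x (j - 1)) with hm
  set y : Fin r → Δ := m⁻¹ * x with hy
  have hx : x = m * y := by rw [hy]; group
  have hy1 : y (j - 1) = 1 := by
    rw [hy, Pi.mul_apply, Pi.inv_apply, hm, Pi.mulSingle_eq_same, inv_mul_cancel]
  calc φ x j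
      = (φ m * φ y) j := by rw [← map_mul, ← hx]
    _ = alphaFn φ (j-1) (x (j-1)) * φ y j := by
        rw [hm, phi_mulSingle φ hperm, Pi.mul_apply, show j - 1 + 1 = j by ring,
          Pi.mulSingle_eq_same]
    _ = alphaFn φ (j-1) (x (j-1)) := by
        rw [phi_coord_one φ hΔ hperm hy1, mul_one]

/-- Iterated application of the `alphaFn` maps starting from coordinate `0`. -/
def chainFn (φ : MulAut (Fin r → Δ)) (a : Δ) : ℕ → Δ
  | 0 => a
  | n + 1 => alphaFn φ (n : Fin r) (chainFn φ a n)

theorem chainFn_succ (a : Δ) (n : ℕ) :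
    chainFn φ a (n + 1) = alphaFn φ (n : Fin r) (chainFn φ a n) := rfl

theorem chainFn_mul (a b : Δ) (n : ℕ) :
    chainFn φ (a * b) n = chainFn φ a n * chainFn φ b n := by
  induction n with
  | zero => rfl
  | succ n ih => rw [chainFn_succ, chainFn_succ, chainFn_succ, ih, alphaFn_mul]

theorem chainFn_surj
    (hperm : ∀ i : Fin r,
      Subgroup.map φ.toMonoidHom (factorSub (Δ := fun _ : Fin r => Δ) i) = factorSub (i + 1))
    (n : ℕ) (c : Δ) : ∃ a, chainFn φ a n = c := by
  induction n generalizing c with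
  | zero => exact ⟨c, rfl⟩
  | succ n ih =>
    obtain ⟨b, hb⟩ := alphaFn_surj φ hperm (n : Fin r) c
    obtain ⟨a, ha⟩ := ih b
    exact ⟨a, by rw [chainFn_succ, ha, hb]⟩

theorem phi_pow_mulSingle
    (hperm : ∀ i : Fin r,
      Subgroup.map φ.toMonoidHom (factorSub (Δ := fun _ : Fin r => Δ) i) = factorSub (i + 1))
    (a : Δ) (n : ℕ) :
    (φ ^ n) (Pi.mulSingle (0 : Fin r) a) = Pi.mulSingle (n : Fin r) (chainFn φ a n) := by
  induction n with
  | zero => simp [chainFn]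
  | succ n ih =>
    rw [pow_succ' φ n, MulAut.mul_apply, ih, phi_mulSingle φ hperm, chainFn_succ,
      show ((n + 1 : ℕ) : Fin r) = (n : Fin r) + 1 by push_cast; ring]

theorem chainFn_r (hord : orderOf φ = r)
    (hperm : ∀ i : Fin r,
      Subgroup.map φ.toMonoidHom (factorSub (Δ := fun _ : Fin r => Δ) i) = factorSub (i + 1))
    (a : Δ) : chainFn φ a r = a := by
  have h1 : φ ^ r = 1 := by
    have := pow_orderOf_eq_one φ
    rwa [hord] at this
  have h2 := phi_pow_mulSingle φ hperm a r
  rw [h1, Fin.natCast_self] at h2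
  have h3 := congrFun h2 0
  simp only [MulAut.one_apply, Pi.mulSingle_eq_same] at h3
  exact h3.symm

theorem chainFn_val_add_one (hord : orderOf φ = r)
    (hperm : ∀ i : Fin r,
      Subgroup.map φ.toMonoidHom (factorSub (Δ := fun _ : Fin r => Δ) i) = factorSub (i + 1))
    (a : Δ) (j : Fin r) :
    chainFn φ a ((j + 1 : Fin r)).val = chainFn φ a (j.val + 1) := by
  have hv : ((j + 1 : Fin r)).val = (j.val + 1) % r := by
    rw [Fin.val_add, Fin.val_one', Nat.add_mod j.val 1 r, Nat.mod_eq_of_lt j.isLt]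
  rw [hv]
  rcases Nat.lt_or_ge (j.val + 1) r with h | h
  · rw [Nat.mod_eq_of_lt h]
  · have hjr : j.val + 1 = r := by have := j.isLt; omega
    rw [hjr, Nat.mod_self]
    exact (chainFn_r φ hord hperm a).symm

/-- The element of the diagonal `D` with coordinate `0` equal to `a`. -/
def deltaFn (φ : MulAut (Fin r → Δ)) (a : Δ) : Fin r → Δ := fun j => chainFn φ a j.val

theorem deltaFn_mem (hΔ : IsNonabelianSimple Δ) (hord : orderOf φ = r)
    (hperm : ∀ i : Fin r,
      Subgroup.map φ.toMonoidHom (factorSub (Δ := fun _ : Fin r => Δ) i) = factorSub (i + 1))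
    (a : Δ) : deltaFn φ a ∈ fixedSub φ := by
  show φ (deltaFn φ a) = deltaFn φ a
  funext j
  rw [phi_apply φ hΔ hperm]
  have h1 : alphaFn φ (j - 1) (deltaFn φ a (j - 1)) = chainFn φ a ((j - 1).val + 1) := by
    rw [chainFn_succ, Fin.cast_val_eq_self]
    rfl
  have h2 := chainFn_val_add_one φ hord hperm a (j - 1)
  rw [show j - 1 + 1 = j by ring] at h2
  rw [h1, ← h2]
  rfl

theorem fixed_eq_delta (hΔ : IsNonabelianSimple Δ)
    (hperm : ∀ i : Fin r,
      Subgroup.map φ.toMonoidHom (factorSub (Δ := fun _ : Fin r => Δ) i) = factorSub (i + 1))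
    {d : Fin r → Δ} (hd : d ∈ fixedSub φ) : d = deltaFn φ (d 0) := by
  have hd' : φ d = d := hd
  have key : ∀ n : ℕ, d (n : Fin r) = chainFn φ (d 0) n := by
    intro n
    induction n with
    | zero => simp [chainFn]
    | succ n ih =>
      have h1 := phi_apply φ hΔ hperm d ((n : Fin r) + 1)
      rw [hd', show ((n : Fin r) + 1) - 1 = (n : Fin r) by ring] at h1
      rw [show ((n + 1 : ℕ) : Fin r) = (n : Fin r) + 1 by push_cast; ring, h1, ih,
        chainFn_succ]
  funext j
  have := key j.val
  rwa [Fin.cast_val_eq_self] at this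

end Stmt9Aux

open Stmt9Aux

/-- **Lemma 3.6.** Under Hypothesis (*), a subgroup of `S` isomorphic to `S_1` and normalized
by the diagonal `D = C_S(φ)` is a `d`-subgroup. -/
theorem stmt9 {Δ : Type u} [Group Δ] [Finite Δ] (hΔ : IsNonabelianSimple Δ)
    (r : ℕ) [NeZero r] (φ : MulAut (Fin r → Δ)) (hord : orderOf φ = r)
    (hperm : ∀ i : Fin r,
      Subgroup.map φ.toMonoidHom (factorSub (Δ := fun _ : Fin r => Δ) i) = factorSub (i + 1))
    (H : Subgroup (Fin r → Δ)) (hiso : Nonempty (↥H ≃* Δ))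
    (hnorm : ∀ d ∈ fixedSub φ, ∀ h ∈ H, d * h * d⁻¹ ∈ H) :
    IsDSubgroup φ H := by
  classical
  obtain ⟨e0⟩ := hiso
  haveI : IsSimpleGroup Δ := hΔ.1
  haveI : Nontrivial ↥H := e0.toEquiv.nontrivial
  haveI : IsSimpleGroup ↥H :=
    IsSimpleGroup.isSimpleGroup_of_surjective e0.symm.toMonoidHom e0.symm.surjective
  set I : Finset (Fin r) := Finset.univ.filter (fun j => ∃ h ∈ H, h j ≠ 1) with hIdef
  have hmemI : ∀ j : Fin r, j ∈ I ↔ ∃ h ∈ H, h j ≠ 1 := by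
    intro j; simp [hIdef]
  have hnotI : ∀ j ∉ I, ∀ h ∈ H, h j = 1 := by
    intro j hj h hh
    by_contra hne
    exact hj ((hmemI j).mpr ⟨h, hh, hne⟩)
  -- `I` is nonempty
  obtain ⟨x0, hx0⟩ := exists_ne (1 : ↥H)
  have hx0' : (x0 : Fin r → Δ) ≠ 1 := by
    intro hco
    exact hx0 (Subtype.ext hco)
  obtain ⟨j0, hj0⟩ : ∃ j, (x0 : Fin r → Δ) j ≠ 1 := by
    by_contra hcon
    push_neg at hcon
    exact hx0' (funext hcon)
  have hIne : I.Nonempty := ⟨j0, (hmemI j0).mpr ⟨x0, x0.2, hj0⟩⟩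
  -- evaluation at any coordinate of `I` is bijective on `H`
  have keyBij : ∀ i ∈ I, Function.Bijective
      ((Pi.evalMonoidHom (fun _ : Fin r => Δ) i).comp H.subtype) := by
    intro i hi
    set f := (Pi.evalMonoidHom (fun _ : Fin r => Δ) i).comp H.subtype with hf
    have hker : f.ker = ⊥ := by
      rcases f.normal_ker.eq_bot_or_eq_top with h | h
      · exact h
      · exfalso
        obtain ⟨h1, hh1, hne1⟩ := (hmemI i).mp hi
        have : (⟨h1, hh1⟩ : ↥H) ∈ f.ker := by rw [h]; trivial
        exact hne1 (MonoidHom.mem_ker.mp this)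
    have hinj : Function.Injective f := (MonoidHom.ker_eq_bot_iff f).mp hker
    exact (Nat.bijective_iff_injective_and_card f).mpr ⟨hinj, Nat.card_congr e0.toEquiv⟩
  obtain ⟨i0, hi0⟩ := hIne
  set EH : ↥H ≃* Δ :=
    MulEquiv.ofBijective ((Pi.evalMonoidHom (fun _ : Fin r => Δ) i0).comp H.subtype)
      (keyBij i0 hi0) with hEHdef
  have hEH : ∀ x : ↥H, EH x = (x : Fin r → Δ) i0 := fun x => rfl
  have hEHsymm : ∀ (h : ↥H), EH.symm ((h : Fin r → Δ) i0) = h := by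
    intro h
    rw [← hEH h, MulEquiv.symm_apply_apply]
  -- the coordinate functions of H in terms of the coordinate at i0
  set γ : Fin r → Δ → Δ := fun j t => ((EH.symm t : ↥H) : Fin r → Δ) j with hγdef
  have hγH : ∀ (h : ↥H) (j : Fin r), γ j ((h : Fin r → Δ) i0) = (h : Fin r → Δ) j := by
    intro h j
    rw [hγdef]
    simp only
    rw [hEHsymm h]
  have hγmul : ∀ (j : Fin r) (s t : Δ), γ j (s * t) = γ j s * γ j t := by
    intro j s t
    rw [hγdef]
    simp only [map_mul, Subgroup.coe_mul, Pi.mul_apply]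
  have hγsurj : ∀ j ∈ I, Function.Surjective (γ j) := by
    intro j hj u
    obtain ⟨h, hh⟩ := (keyBij j hj).2 u
    exact ⟨(h : Fin r → Δ) i0, by rw [hγH h j]; exact hh⟩
  -- key conjugation computation
  have hγchain : ∀ j ∈ I, ∀ a : Δ,
      γ j (chainFn φ a i0.val) = chainFn φ a j.val := by
    intro j hj a
    have hconj : ∀ t : Δ,
        γ j (chainFn φ a i0.val * t * (chainFn φ a i0.val)⁻¹)
          = chainFn φ a j.val * γ j t * (chainFn φ a j.val)⁻¹ := by
      intro t
      have hd : deltaFn φ a ∈ fixedSub φ := deltaFn_mem φ hΔ hord hperm a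
      have hmem' : deltaFn φ a * ↑(EH.symm t) * (deltaFn φ a)⁻¹ ∈ H :=
        hnorm _ hd _ (EH.symm t).2
      set h' : ↥H := ⟨_, hmem'⟩ with hh'def
      have hti0 : (↑(EH.symm t) : Fin r → Δ) i0 = t := by
        rw [← hEH (EH.symm t), MulEquiv.apply_symm_apply]
      have h'i0 : (h' : Fin r → Δ) i0
          = chainFn φ a i0.val * t * (chainFn φ a i0.val)⁻¹ := by
        rw [hh'def]
        simp only [Pi.mul_apply, Pi.inv_apply]
        rw [hti0]
        rfl
      have h'j : (h' : Fin r → Δ) j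
          = chainFn φ a j.val * γ j t * (chainFn φ a j.val)⁻¹ := by
        rw [hh'def]
        simp only [Pi.mul_apply, Pi.inv_apply]
        rfl
      calc γ j (chainFn φ a i0.val * t * (chainFn φ a i0.val)⁻¹)
          = γ j ((h' : Fin r → Δ) i0) := by rw [h'i0]
        _ = (h' : Fin r → Δ) j := hγH h' j
        _ = chainFn φ a j.val * γ j t * (chainFn φ a j.val)⁻¹ := h'j
    have hγone : γ j 1 = 1 := by
      rw [hγdef]
      simp only [map_one, Subgroup.coe_one, Pi.one_apply]
    have hγinv : ∀ t, γ j t⁻¹ = (γ j t)⁻¹ := by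
      intro t
      have := hγmul j t t⁻¹
      rw [mul_inv_cancel, hγone] at this
      exact (inv_eq_of_mul_eq_one_right this.symm).symm
    have hcent : ∀ u : Δ,
        ((chainFn φ a j.val)⁻¹ * γ j (chainFn φ a i0.val)) * u
          = u * ((chainFn φ a j.val)⁻¹ * γ j (chainFn φ a i0.val)) := by
      intro u
      obtain ⟨t, rfl⟩ := hγsurj j hj u
      have h1 := hconj t
      rw [hγmul, hγmul, hγinv] at h1
      -- h1 : γ c * γ t * (γ c)⁻¹ = cj * γ t * cj⁻¹
      set g := γ j (chainFn φ a i0.val)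
      set cj := chainFn φ a j.val
      set w := γ j t
      calc cj⁻¹ * g * w
          = cj⁻¹ * (g * w * g⁻¹) * g := by group
        _ = cj⁻¹ * (cj * w * cj⁻¹) * g := by rw [h1]
        _ = w * (cj⁻¹ * g) := by group
    have := center_triv hΔ hcent
    have h2 : chainFn φ a j.val = γ j (chainFn φ a i0.val) := by
      have h3 := inv_mul_eq_one.mp this
      exact h3
    exact h2.symm
  -- conclusion
  refine ⟨I, ⟨i0, hi0⟩, ?_⟩
  ext x
  simp only [dSubgroup, Subgroup.mem_map]
  constructor
  · intro hx
    obtain ⟨a, ha⟩ := chainFn_surj φ hperm i0.val (x i0)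
    refine ⟨deltaFn φ a, deltaFn_mem φ hΔ hord hperm a, ?_⟩
    funext j
    show (if j ∈ (↑I : Set (Fin r)) then deltaFn φ a j else 1) = x j
    by_cases hj : j ∈ I
    · rw [if_pos (Finset.mem_coe.mpr hj)]
      have h1 : deltaFn φ a j = chainFn φ a j.val := rfl
      rw [h1, ← hγchain j hj a, ha]
      exact hγH ⟨x, hx⟩ j
    · rw [if_neg (fun hc => hj (Finset.mem_coe.mp hc))]
      exact (hnotI j hj x hx).symm
  · rintro ⟨d, hd, rfl⟩
    have hd' : d = deltaFn φ (d 0) := fixed_eq_delta φ hΔ hperm hd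
    set a := d 0 with hadef
    have hcoe : ((EH.symm (chainFn φ a i0.val) : ↥H) : Fin r → Δ)
        = restrictSupp (↑I : Set (Fin r)) d := by
      funext j
      show ((EH.symm (chainFn φ a i0.val) : ↥H) : Fin r → Δ) j
        = (if j ∈ (↑I : Set (Fin r)) then d j else 1)
      by_cases hj : j ∈ I
      · rw [if_pos (Finset.mem_coe.mpr hj)]
        have h1 : ((EH.symm (chainFn φ a i0.val) : ↥H) : Fin r → Δ) j
            = γ j (chainFn φ a i0.val) := rfl
        rw [h1, hγchain j hj a]
        conv_rhs => rw [hd']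
        rfl
      · rw [if_neg (fun hc => hj (Finset.mem_coe.mp hc))]
        exact hnotI j hj _ (EH.symm (chainFn φ a i0.val)).2
    rw [← hcoe]
    exact (EH.symm (chainFn φ a i0.val)).2


end Statements
end

section
/- Assume Hypothesis (*) with r = |φ| a prime. If H is a φ-invariant subgroup of S containing the diagonal D = C_S(φ), then either H = D or H = S. -/
section Statements

universe u

open EngelPaper
open Fin.NatCast


section Stmt10Aux

open Finset

variable {Δ : Type u} [Group Δ] {r : ℕ} [NeZero r]

theorem aux_noncommProd_eq_single {α β : Type*} [Monoid β] [DecidableEq α]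
    (s : Finset α) (f : α → β) (comm) (a : α) (ha : a ∈ s)
    (h : ∀ x ∈ s, x ≠ a → f x = 1) : s.noncommProd f comm = f a := by
  have h1 : s.noncommProd f comm = (insert a (s.erase a)).noncommProd f
      (by rw [Finset.insert_erase ha]; exact comm) := Finset.noncommProd_congr (Finset.insert_erase ha).symm
    (fun x _ => rfl) comm
  rw [h1, Finset.noncommProd_insert_of_notMem _ _ _ _ (Finset.notMem_erase _ _),
    Finset.noncommProd_eq_pow_card _ _ _ 1
      (fun x hx => h x (Finset.mem_of_mem_erase hx) (Finset.ne_of_mem_erase hx)),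
    one_pow, mul_one]

theorem aux_mem_factorSub {i : Fin r} {x : Fin r → Δ} :
    x ∈ factorSub (Δ := fun _ : Fin r => Δ) i ↔ ∀ k, k ≠ i → x k = 1 := by
  constructor
  · intro h k hk; exact h k hk
  · intro h k hk; exact h k hk

theorem aux_single_mem (i : Fin r) (t : Δ) :
    Pi.mulSingle i t ∈ factorSub (Δ := fun _ : Fin r => Δ) i :=
  aux_mem_factorSub.2 fun k hk => by rw [Pi.mulSingle_eq_of_ne hk]

theorem aux_eq_single {i : Fin r} {x : Fin r → Δ}
    (hx : x ∈ factorSub (Δ := fun _ : Fin r => Δ) i) :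
    x = Pi.mulSingle i (x i) := by
  funext k
  by_cases hk : k = i
  · subst hk; simp
  · rw [Pi.mulSingle_eq_of_ne hk, aux_mem_factorSub.1 hx k hk]

theorem aux_factor_commute {i j : Fin r} (hij : i ≠ j) {a b : Fin r → Δ}
    (ha : a ∈ factorSub (Δ := fun _ : Fin r => Δ) i)
    (hb : b ∈ factorSub (Δ := fun _ : Fin r => Δ) j) : Commute a b := by
  show a * b = b * a
  funext k
  show a k * b k = b k * a k
  by_cases hk : k = i
  · have hb1 : b k = 1 := aux_mem_factorSub.1 hb k (hk ▸ hij)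
    rw [hb1, mul_one, one_mul]
  · have ha1 : a k = 1 := aux_mem_factorSub.1 ha k hk
    rw [ha1, mul_one, one_mul]

theorem aux_eval_prod_single (f : Fin r → (Fin r → Δ)) (comm) (j a : Fin r)
    (h : ∀ k, k ≠ a → f k j = 1) :
    (Finset.univ.noncommProd f comm) j = f a j := by
  have h1 := Finset.map_noncommProd Finset.univ f comm
    (Pi.evalMonoidHom (fun _ : Fin r => Δ) j)
  rw [show (Finset.univ.noncommProd f comm) j
      = Pi.evalMonoidHom (fun _ : Fin r => Δ) j (Finset.univ.noncommProd f comm) from rfl, h1]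
  exact aux_noncommProd_eq_single _ _ _ a (Finset.mem_univ a) (fun x _ hx => h x hx)

theorem aux_eval_prod_one (f : Fin r → (Fin r → Δ)) (comm) (j : Fin r)
    (h : ∀ k, f k j = 1) :
    (Finset.univ.noncommProd f comm) j = 1 := by
  rw [aux_eval_prod_single f comm j 0 (fun k _ => h k)]
  exact h 0

theorem aux_apply_eq_one (ψ : MulAut (Fin r → Δ)) (σ : Fin r → Fin r)
    (hσ : Function.Injective σ)
    (hψ : ∀ k, Subgroup.map ψ.toMonoidHom (factorSub (Δ := fun _ : Fin r => Δ) k)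
      = factorSub (σ k))
    (x : Fin r → Δ) (a : Fin r) (hx : x a = 1) : (ψ x) (σ a) = 1 := by
  classical
  have e1 := Finset.map_noncommProd Finset.univ (fun i => Pi.mulSingle i (x i))
    (fun i _ j _ _ => Pi.mulSingle_apply_commute x i j) ψ.toMonoidHom
  rw [Finset.noncommProd_mulSingle x] at e1
  rw [show ψ x = ψ.toMonoidHom x from rfl, e1]
  apply aux_eval_prod_one
  intro k
  by_cases hk : k = a
  · subst hk
    rw [hx]
    simp
  · have hmem : ψ.toMonoidHom (Pi.mulSingle k (x k))
        ∈ factorSub (Δ := fun _ : Fin r => Δ) (σ k) := by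
      rw [← hψ k]
      exact Subgroup.mem_map_of_mem _ (aux_single_mem k (x k))
    exact aux_mem_factorSub.1 hmem (σ a) (fun hcon => hk (hσ hcon.symm))

theorem aux_map_pow {φ : MulAut (Fin r → Δ)}
    (hperm : ∀ i : Fin r, Subgroup.map φ.toMonoidHom
      (factorSub (Δ := fun _ : Fin r => Δ) i) = factorSub (i + 1)) :
    ∀ (n : ℕ) (i : Fin r), Subgroup.map (φ ^ n).toMonoidHom
      (factorSub (Δ := fun _ : Fin r => Δ) i) = factorSub (i + (n : Fin r)) := by
  intro n
  induction n with
  | zero =>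
    intro i
    have h0 : (φ ^ 0).toMonoidHom = MonoidHom.id _ := by
      ext x; rw [pow_zero]; rfl
    rw [h0, Subgroup.map_id]
    norm_num
  | succ n ih =>
    intro i
    have hcomp : (φ ^ (n + 1)).toMonoidHom = ((φ ^ n).toMonoidHom).comp φ.toMonoidHom := by
      ext x; rw [pow_succ]; rfl
    rw [hcomp, ← Subgroup.map_map, hperm i, ih (i + 1)]
    congr 1
    push_cast
    abel

theorem aux_finval (a : Fin r) : ((a + 1 : Fin r)).val % r = (a.val + 1) % r := by
  rw [Fin.val_add, Fin.val_one']
  conv_rhs => rw [Nat.add_mod]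
  rw [Nat.mod_eq_of_lt a.isLt, Nat.mod_mod_of_dvd _ dvd_rfl]

theorem aux_exists_diag {φ : MulAut (Fin r → Δ)}
    (hperm : ∀ i : Fin r, Subgroup.map φ.toMonoidHom
      (factorSub (Δ := fun _ : Fin r => Δ) i) = factorSub (i + 1))
    (hord : orderOf φ = r) (i : Fin r) (u : Δ) :
    ∃ d, d ∈ fixedSub φ ∧ d i = u := by
  classical
  have hmap := aux_map_pow hperm
  have h1 : Pi.mulSingle i u ∈ factorSub (Δ := fun _ : Fin r => Δ) ((0 : Fin r) + (i.val : Fin r)) := by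
    rw [zero_add, Fin.cast_val_eq_self]
    exact aux_single_mem i u
  rw [← hmap i.val 0] at h1
  obtain ⟨y, hy, hyeq⟩ := h1
  set F : Fin r → (Fin r → Δ) := fun k => (φ ^ (k.val)) y with hF
  have hFmem : ∀ k : Fin r, F k ∈ factorSub (Δ := fun _ : Fin r => Δ) k := by
    intro k
    have hm : (φ ^ (k.val)) y ∈ Subgroup.map (φ ^ k.val).toMonoidHom
        (factorSub (Δ := fun _ : Fin r => Δ) 0) :=
      Subgroup.mem_map_of_mem _ hy
    rwa [hmap, zero_add, Fin.cast_val_eq_self] at hm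
  have hcomm : ((Finset.univ : Finset (Fin r)) : Set (Fin r)).Pairwise (Function.onFun Commute F) :=
    fun k _ l _ hkl => aux_factor_commute hkl (hFmem k) (hFmem l)
  refine ⟨Finset.univ.noncommProd F hcomm, ?_, ?_⟩
  · show φ (Finset.univ.noncommProd F hcomm) = Finset.univ.noncommProd F hcomm
    have e1 := Finset.map_noncommProd Finset.univ F hcomm φ.toMonoidHom
    funext j
    rw [show φ (Finset.univ.noncommProd F hcomm)
        = φ.toMonoidHom (Finset.univ.noncommProd F hcomm) from rfl, e1]
    have hGmem : ∀ k : Fin r, φ.toMonoidHom (F k) ∈ factorSub (Δ := fun _ : Fin r => Δ) (k + 1) := by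
      intro k
      rw [← hperm k]
      exact Subgroup.mem_map_of_mem _ (hFmem k)
    erw [aux_eval_prod_single _ _ j (j - 1)
      (fun k hk => aux_mem_factorSub.1 (hGmem k) j (fun h => hk (eq_sub_iff_add_eq.2 h.symm)))]
    rw [aux_eval_prod_single F hcomm j j
      (fun k hk => aux_mem_factorSub.1 (hFmem k) j (Ne.symm hk))]
    have hG : φ.toMonoidHom (F (j - 1)) = (φ ^ ((j - 1).val + 1)) y := by
      rw [pow_succ']
      rfl
    rw [hG]
    have hpow : φ ^ ((j - 1).val + 1) = φ ^ (j.val) := by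
      rw [pow_eq_pow_iff_modEq, hord]
      show ((j - 1).val + 1) % r = j.val % r
      have hv := aux_finval (j - 1)
      rw [sub_add_cancel] at hv
      exact hv.symm
    rw [hpow]
  · rw [aux_eval_prod_single F hcomm i i
      (fun k hk => aux_mem_factorSub.1 (hFmem k) i (Ne.symm hk))]
    show (φ ^ i.val) y i = u
    rw [show (φ ^ i.val) y = Pi.mulSingle i u from hyeq]
    simp

theorem aux_coord_iff {φ : MulAut (Fin r → Δ)}
    (hperm : ∀ i : Fin r, Subgroup.map φ.toMonoidHom
      (factorSub (Δ := fun _ : Fin r => Δ) i) = factorSub (i + 1))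
    (x : Fin r → Δ) (i : Fin r) : x i = 1 ↔ (φ x) (i + 1) = 1 := by
  constructor
  · intro h
    exact aux_apply_eq_one φ (· + 1) (add_left_injective 1) hperm x i h
  · intro h
    have hsymm : ∀ k, Subgroup.map φ.symm.toMonoidHom
        (factorSub (Δ := fun _ : Fin r => Δ) k) = factorSub (k - 1) := by
      intro k
      have h1 : Subgroup.map φ.symm.toMonoidHom
          (Subgroup.map φ.toMonoidHom (factorSub (Δ := fun _ : Fin r => Δ) (k - 1)))
          = Subgroup.map φ.symm.toMonoidHom (factorSub (Δ := fun _ : Fin r => Δ) (k - 1 + 1)) := by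
        rw [hperm (k - 1)]
      rw [Subgroup.map_map,
        show φ.symm.toMonoidHom.comp φ.toMonoidHom = MonoidHom.id _ from
          MonoidHom.ext fun y => φ.symm_apply_apply y,
        Subgroup.map_id, sub_add_cancel] at h1
      exact h1.symm
    have hinj : Function.Injective (fun k : Fin r => k - 1) := by
      intro a b hab
      simpa using congrArg (fun z : Fin r => z + 1) hab
    have h2 := aux_apply_eq_one φ.symm (fun k => k - 1) hinj hsymm (φ x) (i + 1) h
    simp only [add_sub_cancel_right, MulEquiv.symm_apply_apply] at h2
    exact h2

theorem aux_exists_noncomm (hΔ : IsNonabelianSimple Δ) {g : Δ} (hg : g ≠ 1) :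
    ∃ v : Δ, v * g ≠ g * v := by
  by_contra hcon
  push_neg at hcon
  have hgz : g ∈ Subgroup.center Δ := Subgroup.mem_center_iff.2 hcon
  obtain ⟨hsimp, a, b, hab⟩ := hΔ
  rcases hsimp.eq_bot_or_eq_top_of_normal (Subgroup.center Δ) inferInstance with h | h
  · rw [h, Subgroup.mem_bot] at hgz
    exact hg hgz
  · have ha : a ∈ Subgroup.center Δ := h.symm ▸ Subgroup.mem_top a
    exact hab (Subgroup.mem_center_iff.1 ha b).symm

end Stmt10Aux

/-- **Lemma 3.7.** Under Hypothesis (*) with `r = |φ|` prime, a `φ`-invariant subgroup of `S`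
containing the diagonal `D = C_S(φ)` is either `D` or `S`. -/
theorem stmt10 {Δ : Type u} [Group Δ] [Finite Δ] (hΔ : IsNonabelianSimple Δ)
    (r : ℕ) [NeZero r] (hrp : r.Prime) (φ : MulAut (Fin r → Δ)) (hord : orderOf φ = r)
    (hperm : ∀ i : Fin r,
      Subgroup.map φ.toMonoidHom (factorSub (Δ := fun _ : Fin r => Δ) i) = factorSub (i + 1))
    (H : Subgroup (Fin r → Δ)) (hinv : Subgroup.map φ.toMonoidHom H = H)
    (hD : fixedSub φ ≤ H) :
    H = fixedSub φ ∨ H = ⊤ := by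
  classical
  have hmemφ : ∀ x, x ∈ H → φ x ∈ H := by
    intro x hx
    rw [← hinv]
    exact Subgroup.mem_map.2 ⟨x, hx, rfl⟩
  have hmemψ : ∀ x, x ∈ H → φ.symm x ∈ H := by
    intro x hx
    rw [← hinv] at hx
    obtain ⟨y, hy, rfl⟩ := Subgroup.mem_map.1 hx
    simpa using hy
  have hdiag : ∀ (i : Fin r) (u : Δ), ∃ d, d ∈ fixedSub φ ∧ d i = u :=
    aux_exists_diag hperm hord
  have hK1 : ∀ (x : Fin r → Δ) (i : Fin r), x i = 1 ↔ (φ x) (i + 1) = 1 :=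
    aux_coord_iff hperm
  set Rel : Fin r → Fin r → Prop := fun i j => ∀ x ∈ H, (x i = 1 ↔ x j = 1) with hRel
  have rel_shift : ∀ i j, Rel i j → Rel (i + 1) (j + 1) := by
    intro i j h x hx
    have hy := hmemψ x hx
    have hx' : φ (φ.symm x) = x := φ.apply_symm_apply x
    constructor
    · intro h1
      have h2 := (hK1 (φ.symm x) j).1 ((h _ hy).1 ((hK1 (φ.symm x) i).2 (by rw [hx']; exact h1)))
      rwa [hx'] at h2
    · intro h1
      have h2 := (hK1 (φ.symm x) i).1 ((h _ hy).2 ((hK1 (φ.symm x) j).2 (by rw [hx']; exact h1)))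
      rwa [hx'] at h2
  have rel_shiftn : ∀ i j, Rel i j → ∀ n : ℕ, Rel (i + (n : Fin r)) (j + (n : Fin r)) := by
    intro i j h n
    induction n with
    | zero => simpa using h
    | succ n ih =>
      have h2 := rel_shift _ _ ih
      have hc : ((n + 1 : ℕ) : Fin r) = (n : Fin r) + 1 := by push_cast; ring
      rw [hc, ← add_assoc, ← add_assoc]
      exact h2
  have rel_shiftc : ∀ i j, Rel i j → ∀ c : Fin r, Rel (i + c) (j + c) := by
    intro i j h c
    have h2 := rel_shiftn i j h c.val
    rwa [Fin.cast_val_eq_self] at h2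
  by_cases hcase : ∃ i j : Fin r, i ≠ j ∧ Rel i j
  · left
    obtain ⟨i, j, hij, hrel⟩ := hcase
    have h0 : Rel 0 (j - i) := by
      have h2 := rel_shiftc i j hrel (-i)
      simpa [sub_eq_add_neg] using h2
    set B : AddSubgroup (Fin r) :=
      { carrier := {c | Rel 0 c}
        zero_mem' := fun x _ => Iff.rfl
        add_mem' := by
          intro a b ha hb x hx
          refine (hb x hx).trans ?_
          have h2 := rel_shiftc 0 a ha b
          rw [zero_add] at h2
          exact h2 x hx
        neg_mem' := by
          intro a ha x hx
          have h2 := rel_shiftc 0 a ha (-a)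
          rw [zero_add, add_neg_cancel] at h2
          exact (h2 x hx).symm } with hB
    have hmemB : ∀ c : Fin r, c ∈ B ↔ Rel 0 c := fun c => Iff.rfl
    have hcardfin : Nat.card (Fin r) = r := by simp
    have hcardB : Nat.card B = 1 ∨ Nat.card B = r := by
      refine hrp.eq_one_or_self_of_dvd _ ?_
      have h2 := AddSubgroup.card_addSubgroup_dvd_card B
      rwa [hcardfin] at h2
    have hBtop : B = ⊤ := by
      rcases hcardB with h | h
      · exfalso
        have hji : j - i ∈ B := h0
        have hbot : B = ⊥ := AddSubgroup.card_eq_one.1 h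
        rw [hbot, AddSubgroup.mem_bot] at hji
        exact (sub_ne_zero.2 hij.symm) hji
      · apply AddSubgroup.eq_top_of_card_eq
        rw [h, hcardfin]
    have hall : ∀ c : Fin r, Rel 0 c := fun c => (hmemB c).1 (hBtop ▸ AddSubgroup.mem_top c)
    apply le_antisymm
    · intro x hx
      obtain ⟨d, hd, hd0⟩ := hdiag 0 (x 0)
      have hxd : x * d⁻¹ ∈ H := H.mul_mem hx (H.inv_mem (hD hd))
      have h0' : (x * d⁻¹) 0 = 1 := by
        show x 0 * (d 0)⁻¹ = 1
        rw [hd0, mul_inv_cancel]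
      have hone : x * d⁻¹ = 1 := by
        funext k
        exact (hall k (x * d⁻¹) hxd).1 h0'
      have hxde : x = d := by rwa [mul_inv_eq_one] at hone
      rw [hxde]; exact hd
    · exact hD
  · right
    push_neg at hcase
    have keyP : ∀ i j : Fin r, (∃ x ∈ H, x i = 1 ∧ x j ≠ 1) →
        ∀ v : Δ, ∃ y ∈ H, y i = 1 ∧ y j = v := by
      rintro i j ⟨x, hxH, hxi, hxj⟩ v
      set P : Subgroup Δ := Subgroup.map (Pi.evalMonoidHom (fun _ : Fin r => Δ) j)
        (H ⊓ (Pi.evalMonoidHom (fun _ : Fin r => Δ) i).ker) with hP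
      have hPnormal : P.Normal := by
        constructor
        intro u hu v'
        obtain ⟨y, hy, rfl⟩ := Subgroup.mem_map.1 hu
        obtain ⟨hyH, hyk⟩ := Subgroup.mem_inf.1 hy
        obtain ⟨d, hd, hdj⟩ := hdiag j v'
        refine Subgroup.mem_map.2 ⟨d * y * d⁻¹, Subgroup.mem_inf.2 ⟨?_, ?_⟩, ?_⟩
        · exact H.mul_mem (H.mul_mem (hD hd) hyH) (H.inv_mem (hD hd))
        · have hyi : y i = 1 := hyk
          show d i * y i * (d i)⁻¹ = 1
          rw [hyi, mul_one, mul_inv_cancel]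
        · show d j * y j * (d j)⁻¹ = v' * (Pi.evalMonoidHom (fun _ : Fin r => Δ) j) y * v'⁻¹
          rw [hdj]
          rfl
      have hPne : P ≠ ⊥ := by
        intro hbot
        have hxP : x j ∈ P :=
          Subgroup.mem_map.2 ⟨x, Subgroup.mem_inf.2 ⟨hxH, hxi⟩, rfl⟩
        rw [hbot, Subgroup.mem_bot] at hxP
        exact hxj hxP
      have hPtop : P = ⊤ :=
        (hΔ.1.eq_bot_or_eq_top_of_normal P hPnormal).resolve_left hPne
      have hv : v ∈ P := hPtop ▸ Subgroup.mem_top v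
      obtain ⟨y, hy, hyj⟩ := Subgroup.mem_map.1 hv
      obtain ⟨hyH, hyi⟩ := Subgroup.mem_inf.1 hy
      exact ⟨y, hyH, hyi, hyj⟩
    have shrink : ∀ i j : Fin r, (∃ x ∈ H, x i = 1 ∧ x j ≠ 1) → ∀ m ∈ H, m j ≠ 1 →
        ∃ m' ∈ H, m' j ≠ 1 ∧ m' i = 1 ∧ ∀ k, m k = 1 → m' k = 1 := by
      intro i j hex m hm hmj
      obtain ⟨v, hv⟩ := aux_exists_noncomm hΔ hmj
      obtain ⟨y, hyH, hyi, hyj⟩ := keyP i j hex v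
      refine ⟨m⁻¹ * y * m * y⁻¹,
        H.mul_mem (H.mul_mem (H.mul_mem (H.inv_mem hm) hyH) hm) (H.inv_mem hyH), ?_, ?_, ?_⟩
      · show (m j)⁻¹ * y j * m j * (y j)⁻¹ ≠ 1
        rw [hyj]
        intro hcon
        apply hv
        have h2 := mul_inv_eq_one.mp hcon
        conv_rhs => rw [← h2]
        group
      · show (m i)⁻¹ * y i * m i * (y i)⁻¹ = 1
        rw [hyi, mul_one, inv_mul_cancel, inv_one, mul_one]
      · intro k hk
        show (m k)⁻¹ * y k * m k * (y k)⁻¹ = 1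
        rw [hk, inv_one, one_mul, mul_one, mul_inv_cancel]
    have h01 : (0 : Fin r) ≠ 1 := by
      intro h
      have h2 := congrArg Fin.val h
      rw [Fin.val_zero, Fin.val_one', Nat.mod_eq_of_lt hrp.one_lt] at h2
      exact one_ne_zero h2.symm
    have hHne : ∃ x ∈ H, x ≠ (1 : Fin r → Δ) := by
      by_contra hcon
      push_neg at hcon
      apply hcase 0 1 h01
      intro x hx
      rw [hcon x hx]
      simp
    obtain ⟨x₀, hx₀H, hx₀⟩ := hHne
    set sc : (Fin r → Δ) → ℕ :=
      fun x => (Finset.univ.filter (fun k => x k ≠ 1)).card with hsc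
    set T : Set ℕ := {n | ∃ x ∈ H, x ≠ 1 ∧ sc x = n} with hT
    have hTmem : (sInf T) ∈ T := Nat.sInf_mem ⟨sc x₀, x₀, hx₀H, hx₀, rfl⟩
    obtain ⟨m, hmH, hmne, hmc⟩ := hTmem
    obtain ⟨j, hmj⟩ : ∃ j, m j ≠ 1 := by
      by_contra hcon
      push_neg at hcon
      exact hmne (funext fun k => hcon k)
    have contra : ∀ a b : Fin r, m b ≠ 1 → m a ≠ 1 →
        (∃ x ∈ H, x a = 1 ∧ x b ≠ 1) → False := by
      intro a b hmb hma hex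
      obtain ⟨m', hm'H, hm'b, hm'a, hsupp⟩ := shrink a b hex m hmH hmb
      have hm'ne : m' ≠ 1 := by
        intro h
        exact hm'b (by rw [h]; rfl)
      have hlt : sc m' < sc m := by
        apply Finset.card_lt_card
        rw [Finset.ssubset_iff_of_subset]
        · refine ⟨a, ?_, ?_⟩
          · exact Finset.mem_filter.2 ⟨Finset.mem_univ a, hma⟩
          · intro hmem
            exact (Finset.mem_filter.1 hmem).2 hm'a
        · intro k hk
          have hk2 := (Finset.mem_filter.1 hk).2
          refine Finset.mem_filter.2 ⟨Finset.mem_univ k, ?_⟩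
          intro h
          exact hk2 (hsupp k h)
      have hle : sInf T ≤ sc m' := Nat.sInf_le ⟨m', hm'H, hm'ne, rfl⟩
      omega
    have hsingle : ∀ i, i ≠ j → m i = 1 := by
      by_contra hcon
      push_neg at hcon
      obtain ⟨i, hij, hmi⟩ := hcon
      have hnr := hcase i j hij
      have hw : (∃ x ∈ H, x i = 1 ∧ x j ≠ 1) ∨ (∃ x ∈ H, x j = 1 ∧ x i ≠ 1) := by
        by_contra hcon2
        push_neg at hcon2
        apply hnr
        intro x hx
        constructor
        · exact fun h1 => hcon2.1 x hx h1
        · exact fun h1 => hcon2.2 x hx h1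
      rcases hw with hex | hex
      · exact contra i j hmj hmi hex
      · exact contra j i hmi hmj hex
    have hQ : ∀ u : Δ, Pi.mulSingle j u ∈ H := by
      set Q : Subgroup Δ :=
        Subgroup.comap (MonoidHom.mulSingle (fun _ : Fin r => Δ) j) H with hQdef
      have hQnormal : Q.Normal := by
        constructor
        intro u hu v
        obtain ⟨d, hd, hdj⟩ := hdiag j v
        have heq : Pi.mulSingle j (v * u * v⁻¹) = d * Pi.mulSingle j u * d⁻¹ := by
          funext k
          by_cases hk : k = j
          · subst hk
            simp [Pi.mul_apply, Pi.inv_apply, hdj]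
          · simp [Pi.mul_apply, Pi.inv_apply, Pi.mulSingle_eq_of_ne hk]
        have hu' : Pi.mulSingle j u ∈ H := hu
        show Pi.mulSingle j (v * u * v⁻¹) ∈ H
        rw [heq]
        exact H.mul_mem (H.mul_mem (hD hd) hu') (H.inv_mem (hD hd))
      have hQne : Q ≠ ⊥ := by
        intro hbot
        have hmm : m j ∈ Q := by
          show Pi.mulSingle j (m j) ∈ H
          have hms : Pi.mulSingle j (m j) = m := by
            funext k
            by_cases hk : k = j
            · subst hk; rw [Pi.mulSingle_eq_same]
            · rw [Pi.mulSingle_eq_of_ne hk, hsingle k hk]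
          rw [hms]
          exact hmH
        rw [hbot, Subgroup.mem_bot] at hmm
        exact hmj hmm
      have hQtop : Q = ⊤ :=
        (hΔ.1.eq_bot_or_eq_top_of_normal Q hQnormal).resolve_left hQne
      intro u
      have hu : u ∈ Q := hQtop ▸ Subgroup.mem_top u
      exact hu
    have hspread : ∀ (n : ℕ) (u : Δ), Pi.mulSingle (j + (n : Fin r)) u ∈ H := by
      intro n
      induction n with
      | zero => intro u; simpa using hQ u
      | succ n ih =>
        intro u
        have hc : ((n + 1 : ℕ) : Fin r) = (n : Fin r) + 1 := by push_cast; ring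
        rw [hc, ← add_assoc]
        have hiu : Pi.mulSingle (j + (n : Fin r) + 1) u
            ∈ factorSub (Δ := fun _ : Fin r => Δ) (j + (n : Fin r) + 1) :=
          aux_single_mem _ _
        rw [← hperm (j + (n : Fin r))] at hiu
        obtain ⟨y, hy, hyeq⟩ := Subgroup.mem_map.1 hiu
        have hyH : y ∈ H := by
          rw [aux_eq_single hy]
          exact ih _
        rw [← hyeq]
        exact hmemφ y hyH
    have hallsingle : ∀ (i : Fin r) (u : Δ), Pi.mulSingle i u ∈ H := by
      intro i u
      have h2 := hspread (i - j).val u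
      rwa [Fin.cast_val_eq_self, add_comm, sub_add_cancel] at h2
    rw [eq_top_iff]
    intro x _
    rw [← Finset.noncommProd_mulSingle x]
    exact Subgroup.noncommProd_mem _ _ (fun k _ => hallsingle k (x k))


end Statements
end

section
/- If α is an automorphism of a finite elementary abelian q-group V (q a prime), then there is an element v ∈ V such that the stabilizer of v in ⟨α⟩ is trivial, i.e., C_{⟨α⟩}(v) = 1. -/
section Statements

universe u

open EngelPaper

section AuxLemma54

open Polynomial

private theorem aeval_mul_apply' {K W : Type*} [Field K] [AddCommGroup W] [Module K W]
    (f : Module.End K W) (a b : K[X]) (x : W) :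
    aeval f (a * b) x = aeval f a (aeval f b x) := by
  rw [map_mul]; rfl

open UniqueFactorizationMonoid in
private theorem exists_ann_gen {K W : Type*} [Field K] [AddCommGroup W] [Module K W]
    [Module.Finite K W] (f : Module.End K W) :
    ∃ v : W, ∀ p : K[X], aeval f p v = 0 → aeval f p = 0 := by
  classical
  have hint : IsIntegral K f := Algebra.IsIntegral.isIntegral f
  set m := minpoly K f with hmdef
  have hm0 : m ≠ 0 := minpoly.ne_zero hint
  set F := normalizedFactors m with hFdef
  set S := F.toFinset with hSdef
  set e : K[X] → ℕ := fun ℓ => F.count ℓ with hedef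
  have hprime : ∀ ℓ ∈ S, Prime ℓ := fun ℓ hℓ =>
    prime_of_normalized_factor ℓ (Multiset.mem_toFinset.mp hℓ)
  have hassoc : Associated (∏ ℓ ∈ S, ℓ ^ e ℓ) m := by
    rw [hSdef, hedef, ← Finset.prod_multiset_count]
    exact prod_normalizedFactors hm0
  set Q : K[X] → K[X] := fun ℓ => ∏ ℓ' ∈ S.erase ℓ, ℓ' ^ e ℓ' with hQdef
  have hQ : ∀ ℓ ∈ S, ℓ ^ e ℓ * Q ℓ = ∏ ℓ' ∈ S, ℓ' ^ e ℓ' := fun ℓ h =>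
    Finset.mul_prod_erase S (fun ℓ' => ℓ' ^ e ℓ') h
  have hmz : ∀ p : K[X], m ∣ p → aeval f p = 0 := by
    intro p hp
    obtain ⟨c, rfl⟩ := hp
    rw [map_mul]
    have : aeval f m = 0 := minpoly.aeval K f
    rw [this, zero_mul]
  have hmdvd : ∀ ℓ ∈ S, m ∣ ℓ ^ e ℓ * Q ℓ := by
    intro ℓ hℓ; rw [hQ ℓ hℓ]; exact hassoc.symm.dvd
  have hcop : ∀ ℓ ∈ S, ∀ ℓ' ∈ S, ℓ ≠ ℓ' → IsCoprime ℓ ℓ' := by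
    intro ℓ hℓ ℓ' hℓ' hne
    rw [(hprime ℓ hℓ).coprime_iff_not_dvd]
    intro hd
    have hass := ((hprime ℓ hℓ).irreducible).associated_of_dvd
      ((hprime ℓ' hℓ').irreducible) hd
    exact hne (hass.eq_of_normalized
      (normalize_normalized_factor ℓ (Multiset.mem_toFinset.mp hℓ))
      (normalize_normalized_factor ℓ' (Multiset.mem_toFinset.mp hℓ')))
  have hcopQ : ∀ ℓ ∈ S, IsCoprime ℓ (Q ℓ) := by
    intro ℓ hℓ
    refine IsCoprime.prod_right fun ℓ' hℓ' => IsCoprime.pow_right ?_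
    exact hcop ℓ hℓ ℓ' (Finset.mem_of_mem_erase hℓ') (Ne.symm (Finset.ne_of_mem_erase hℓ'))
  have he1 : ∀ ℓ ∈ S, 1 ≤ e ℓ := fun ℓ h =>
    Multiset.one_le_count_iff_mem.mpr (Multiset.mem_toFinset.mp h)
  have hwex : ∀ ℓ ∈ S, ∃ w : W, aeval f (Q ℓ * ℓ ^ (e ℓ - 1)) w ≠ 0 := by
    intro ℓ hℓ
    by_contra hcon
    push_neg at hcon
    have hz : aeval f (Q ℓ * ℓ ^ (e ℓ - 1)) = 0 := LinearMap.ext fun w => hcon w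
    have hdvd : m ∣ Q ℓ * ℓ ^ (e ℓ - 1) := minpoly.dvd K f hz
    have hQm : ℓ ^ e ℓ * Q ℓ ∣ m := by
      rw [hQ ℓ hℓ]; exact hassoc.dvd
    have h2 : ℓ ^ e ℓ ∣ Q ℓ * ℓ ^ (e ℓ - 1) :=
      ((dvd_mul_right (ℓ ^ e ℓ) (Q ℓ)).trans hQm).trans hdvd
    have h3 : ℓ ^ e ℓ ∣ ℓ ^ (e ℓ - 1) :=
      ((hcopQ ℓ hℓ).pow_left).dvd_of_dvd_mul_left h2
    obtain ⟨d, hd⟩ : ∃ d, e ℓ = d + 1 := ⟨e ℓ - 1, by have := he1 ℓ hℓ; omega⟩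
    rw [hd] at h3
    simp only [Nat.add_sub_cancel, pow_succ] at h3
    obtain ⟨t, ht⟩ := h3
    have hℓ0 : ℓ ≠ 0 := (hprime ℓ hℓ).ne_zero
    have hpd : ℓ ^ d ≠ 0 := pow_ne_zero d hℓ0
    have hone : (1 : K[X]) = ℓ * t := by
      apply mul_left_cancel₀ hpd
      rw [mul_one]
      rw [mul_assoc] at ht
      exact ht
    exact (hprime ℓ hℓ).not_isUnit (IsUnit.of_mul_eq_one t hone.symm)
  choose! w hw using hwex
  refine ⟨∑ ℓ ∈ S, aeval f (Q ℓ) (w ℓ), ?_⟩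
  intro p hp
  rcases eq_or_ne p 0 with rfl | hp0
  · simp
  have key : ∀ ℓ ∈ S, ℓ ^ e ℓ ∣ p := by
    intro ℓ hℓ
    have h0 : aeval f (Q ℓ) (aeval f p (∑ ℓ' ∈ S, aeval f (Q ℓ') (w ℓ'))) = 0 := by
      rw [hp, map_zero]
    rw [map_sum, map_sum] at h0
    have hterm : ∀ ℓ' ∈ S, ℓ' ≠ ℓ →
        aeval f (Q ℓ) (aeval f p (aeval f (Q ℓ') (w ℓ'))) = 0 := by
      intro ℓ' hℓ' hne
      rw [← aeval_mul_apply', ← aeval_mul_apply']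
      have hdv : m ∣ Q ℓ * p * Q ℓ' := by
        have h1 : ℓ' ^ e ℓ' ∣ Q ℓ :=
          Finset.dvd_prod_of_mem _ (Finset.mem_erase.mpr ⟨hne, hℓ'⟩)
        have h2 : m ∣ Q ℓ * Q ℓ' :=
          (hmdvd ℓ' hℓ').trans (mul_dvd_mul h1 dvd_rfl)
        exact h2.trans ⟨p, by ring⟩
      rw [hmz _ hdv]
      rfl
    rw [Finset.sum_eq_single_of_mem ℓ hℓ (fun ℓ' h' hne => hterm ℓ' h' hne)] at h0
    rw [← aeval_mul_apply', ← aeval_mul_apply'] at h0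
    by_contra hnd
    obtain ⟨n, b, hnb, hpeq⟩ := WfDvdMonoid.max_power_factor hp0 (hprime ℓ hℓ).irreducible
    have hlt : n < e ℓ := by
      by_contra hge
      exact hnd ((pow_dvd_pow ℓ (le_of_not_gt hge)).trans ⟨b, hpeq⟩)
    obtain ⟨d, hd⟩ : ∃ d, e ℓ = n + d + 1 := ⟨e ℓ - n - 1, by omega⟩
    have hcopb : IsCoprime (ℓ ^ (d + 1)) (Q ℓ * b) :=
      IsCoprime.pow_left
        ((hcopQ ℓ hℓ).mul_right (((hprime ℓ hℓ).coprime_iff_not_dvd).mpr hnb))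
    obtain ⟨a, c, habc⟩ := hcopb
    have hzero2 : aeval f (ℓ ^ e ℓ * Q ℓ) (w ℓ) = 0 := by
      rw [hmz _ (hmdvd ℓ hℓ)]; rfl
    have hid : Q ℓ * ℓ ^ (e ℓ - 1) =
        (a * ℓ ^ d) * (ℓ ^ e ℓ * Q ℓ) + (c * ℓ ^ d) * (Q ℓ * p * Q ℓ) := by
      have h1 : e ℓ - 1 = n + d := by omega
      rw [h1, hd, hpeq]
      calc Q ℓ * ℓ ^ (n + d)
          = (a * ℓ ^ (d + 1) + c * (Q ℓ * b)) * (Q ℓ * ℓ ^ (n + d)) := by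
            rw [habc, one_mul]
        _ = (a * ℓ ^ d) * (ℓ ^ (n + d + 1) * Q ℓ)
              + (c * ℓ ^ d) * (Q ℓ * (ℓ ^ n * b) * Q ℓ) := by ring
    apply hw ℓ hℓ
    rw [hid, map_add, LinearMap.add_apply,
      aeval_mul_apply' f (a * ℓ ^ d) (ℓ ^ e ℓ * Q ℓ) (w ℓ),
      aeval_mul_apply' f (c * ℓ ^ d) (Q ℓ * p * Q ℓ) (w ℓ),
      hzero2, h0, map_zero, map_zero, add_zero]
  have hprod : (∏ ℓ ∈ S, ℓ ^ e ℓ) ∣ p := by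
    refine Finset.prod_dvd_of_coprime ?_ key
    intro ℓ hℓ ℓ' hℓ' hne
    exact (hcop ℓ (Finset.mem_coe.mp hℓ) ℓ' (Finset.mem_coe.mp hℓ') hne).pow
  exact hmz p (hassoc.symm.dvd.trans hprod)

private def zmodModuleAux (q : ℕ) (V : Type u) [CommGroup V]
    (hpow : ∀ v : V, v ^ q = 1) : Module (ZMod q) (Additive V) :=
  AddCommGroup.zmodModule (fun x => Additive.toMul.injective
    (by rw [toMul_nsmul, toMul_zero]; exact hpow _))

end AuxLemma54

/-- **Lemma 5.4.** An automorphism `α` of a finite elementary abelian `q`-group `V` has a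
regular orbit: there is `v ∈ V` with `C_{⟨α⟩}(v) = 1`. -/
theorem stmt19 {V : Type u} [CommGroup V] [Finite V] (q : ℕ) (hq : q.Prime)
    (helem : ∀ v : V, v ≠ 1 → orderOf v = q) (α : MulAut V) :
    ∃ v : V, ∀ ψ ∈ Subgroup.zpowers α, ψ v = v → ψ = 1 := by
  classical
  haveI : Fact q.Prime := ⟨hq⟩
  have hpow : ∀ v : V, v ^ q = 1 := by
    intro v
    by_cases h : v = 1
    · simp [h]
    · rw [← helem v h]; exact pow_orderOf_eq_one v
  letI : Module (ZMod q) (Additive V) := zmodModuleAux q V hpow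
  let fE : Module.End (ZMod q) (Additive V) :=
    AddMonoidHom.toZModLinearMap q (MonoidHom.toAdditive α.toMonoidHom)
  have fE_apply : ∀ x : Additive V, fE x = Additive.ofMul (α x.toMul) := by
    intro x
    show (AddMonoidHom.toZModLinearMap q (MonoidHom.toAdditive α.toMonoidHom)) x
      = Additive.ofMul (α x.toMul)
    rw [AddMonoidHom.coe_toZModLinearMap]
    rfl
  have hpowap : ∀ (k : ℕ) (x : Additive V),
      (fE ^ k) x = Additive.ofMul ((α ^ k) x.toMul) := by
    intro k
    induction k with
    | zero => intro x; simp
    | succ n ih =>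
      intro x
      rw [pow_succ, pow_succ, Module.End.mul_apply, ih, MulAut.mul_apply, fE_apply]
      rfl
  obtain ⟨v, hv⟩ := exists_ann_gen fE
  refine ⟨Additive.toMul v, ?_⟩
  intro ψ hψ hfix
  haveI : Finite (MulAut V) :=
    Finite.of_injective (fun ψ : MulAut V => (ψ : V → V))
      (fun a b h => by ext x; exact congrFun h x)
  obtain ⟨k, hk⟩ := (Submonoid.mem_powers_iff ψ α).mp
    (mem_powers_iff_mem_zpowers.mpr hψ)
  have haev : ∀ y : Additive V,
      Polynomial.aeval fE ((Polynomial.X : Polynomial (ZMod q)) ^ k - 1) y = (fE ^ k) y - y := by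
    intro y
    have h : Polynomial.aeval fE ((Polynomial.X : Polynomial (ZMod q)) ^ k - 1) = fE ^ k - 1 := by
      rw [map_sub, map_pow, Polynomial.aeval_X, Polynomial.aeval_one]
    rw [h, LinearMap.sub_apply, Module.End.one_apply]
  have h0 : Polynomial.aeval fE ((Polynomial.X : Polynomial (ZMod q)) ^ k - 1) v = 0 := by
    rw [haev v, hpowap k v]
    have : (α ^ k) v.toMul = v.toMul := by rw [hk]; exact hfix
    rw [this]
    simp
  have hop := hv _ h0
  rw [← hk]
  ext x
  have h1 : Polynomial.aeval fE ((Polynomial.X : Polynomial (ZMod q)) ^ k - 1) (Additive.ofMul x) = 0 := by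
    rw [hop]; rfl
  rw [haev, hpowap, sub_eq_zero] at h1
  exact Additive.ofMul.injective h1

end Statements
end
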